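/- Let Δ be a SID expandable for a nullary predicate A. Then: if ief*(C[[A]]_Δ) is treewidth-bounded, then [[A]]_Δ is treewidth-bounded; and if [[A]]_Δ is treewidth-bounded, then ef*(C[[A]]_Δ) is treewidth-bounded. -/

import Mathlib

/-!
Common definitions for the formalization of
"The Treewidth Boundedness Problem for an Inductive Separation Logic of Relations".
-/

namespace SLRTW

/-! ### Relational structures over a fixed universe `V` -/

/-- A structure over the relational signature given by `Rel`, `ar` with universe `V`:
each relation symbol is interpreted as a finite set of tuples, and only finitely many
relation symbols have a nonempty interpretation. -/
structure Str (Rel : Type) (ar : Rel → ℕ) (V : Type) where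
  interp : ∀ r : Rel, Set (Fin (ar r) → V)
  finite_interp : ∀ r, (interp r).Finite
  finite_active : {r : Rel | interp r ≠ ∅}.Finite

/-- Formulas of the separation logic of relations, over relation symbols `Rel` (with
arities `ar`) and predicate symbols `Pr` (with arities `pa`).  Variables are natural
numbers; by convention, the parameters of a predicate of arity `n` are `0, …, n-1`. -/
inductive SLR (Rel : Type) (ar : Rel → ℕ) (Pr : Type) (pa : Pr → ℕ) : Type where
  | emp : SLR Rel ar Pr pa
  | eq (x y : ℕ) : SLR Rel ar Pr pa
  | ne (x y : ℕ) : SLR Rel ar Pr pa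
  | rel (r : Rel) (a : Fin (ar r) → ℕ) : SLR Rel ar Pr pa
  | pred (A : Pr) (a : Fin (pa A) → ℕ) : SLR Rel ar Pr pa
  | star (φ ψ : SLR Rel ar Pr pa) : SLR Rel ar Pr pa
  | ex (x : ℕ) (φ : SLR Rel ar Pr pa) : SLR Rel ar Pr pa

/-- An RGB color scheme: a partition of the set of colors `𝒫(Rel)` into red, green
and blue colors, such that any two blue colors intersect, every green color intersects
every blue color, and every red color is disjoint from some blue color. -/
structure RGB (Rel : Type) where
  red : Set (Set Rel)
  green : Set (Set Rel)
  blue : Set (Set Rel)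
  cover : ∀ C : Set Rel, C ∈ red ∨ C ∈ green ∨ C ∈ blue
  red_green : red ∩ green = ∅
  red_blue : red ∩ blue = ∅
  green_blue : green ∩ blue = ∅
  blue_blue_meet : ∀ C1 ∈ blue, ∀ C2 ∈ blue, (C1 ∩ C2).Nonempty
  green_blue_meet : ∀ C1 ∈ green, ∀ C2 ∈ blue, (C1 ∩ C2).Nonempty
  red_sep : ∀ C1 ∈ red, ∃ C2 ∈ blue, C1 ∩ C2 = ∅

section Defs1

variable {Rel : Type} {ar : Rel → ℕ} {V : Type} {Pr : Type} {pa : Pr → ℕ}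

/-- The support of a structure: the elements occurring in some tuple. -/
def Str.supp (S : Str Rel ar V) : Set V :=
  { u | ∃ (r : Rel) (t : Fin (ar r) → V), t ∈ S.interp r ∧ ∃ i, t i = u }

/-- Two structures are locally disjoint iff their interpretations are pointwise disjoint. -/
def LocDisj (S1 S2 : Str Rel ar V) : Prop :=
  ∀ r, S1.interp r ∩ S2.interp r = ∅

/-- Composition of structures (pointwise union of the interpretations). -/
def Str.comp (S1 S2 : Str Rel ar V) : Str Rel ar V where
  interp r := S1.interp r ∪ S2.interp r
  finite_interp r := (S1.finite_interp r).union (S2.finite_interp r)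
  finite_active := by
    refine (S1.finite_active.union S2.finite_active).subset ?_
    intro r hr
    simp only [Set.mem_setOf_eq, Set.mem_union, ne_eq] at hr ⊢
    rw [Set.union_empty_iff] at hr
    tauto

/-- Composition of a finite family of structures. -/
def bigComp {n : ℕ} (Ss : Fin n → Str Rel ar V) : Str Rel ar V where
  interp r := ⋃ i, (Ss i).interp r
  finite_interp r := Set.finite_iUnion fun i => (Ss i).finite_interp r
  finite_active := by
    refine (Set.finite_iUnion fun i => (Ss i).finite_active).subset ?_
    intro r hr
    simp only [Set.mem_setOf_eq, ne_eq, Set.iUnion_eq_empty, Set.mem_iUnion] at hr ⊢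
    push_neg at hr
    obtain ⟨i, hi⟩ := hr
    exact ⟨i, Set.nonempty_iff_ne_empty.mp hi⟩

/-- A tree decomposition of a structure: a finite tree whose nodes carry finite bags of
elements, covering every tuple, and such that the set of nodes containing any given
support element is nonempty and connected. -/
structure TreeDecomp (S : Str Rel ar V) where
  ι : Type
  instFin : Fintype ι
  G : SimpleGraph ι
  isTree : G.IsTree
  bag : ι → Finset V
  bag_cover : ∀ (r : Rel), ∀ t ∈ S.interp r, ∃ n : ι, ∀ i, t i ∈ bag n
  bag_conn : ∀ u ∈ S.supp, (SimpleGraph.induce {n : ι | u ∈ bag n} G).Connected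

attribute [instance] TreeDecomp.instFin

/-- The width of a tree decomposition: maximal bag size minus one. -/
def TreeDecomp.width {S : Str Rel ar V} (T : TreeDecomp S) : ℕ :=
  (Finset.univ.sup fun n : T.ι => (T.bag n).card) - 1

/-- The treewidth of a structure: the minimal width of a tree decomposition. -/
noncomputable def tw (S : Str Rel ar V) : ℕ :=
  sInf { w | ∃ T : TreeDecomp S, T.width = w }

/-- A set of structures is treewidth-bounded iff the treewidths of its members are
bounded. -/
def TWB (𝒮 : Set (Str Rel ar V)) : Prop :=
  ∃ k : ℕ, ∀ S ∈ 𝒮, tw S ≤ k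

/-- The supremum of the treewidths of a set of structures (in `ℕ∞`). -/
noncomputable def twSet (𝒮 : Set (Str Rel ar V)) : ℕ∞ :=
  ⨆ S ∈ 𝒮, (tw S : ℕ∞)

namespace SLR

/-- Free variables of a formula. -/
def fv : SLR Rel ar Pr pa → Set ℕ
  | .emp => ∅
  | .eq x y => {x, y}
  | .ne x y => {x, y}
  | .rel _ a => Set.range a
  | .pred _ a => Set.range a
  | .star φ ψ => φ.fv ∪ ψ.fv
  | .ex x φ => φ.fv \ {x}

/-- All variables (free or bound) occurring in a formula. -/
def vars : SLR Rel ar Pr pa → Set ℕ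
  | .emp => ∅
  | .eq x y => {x, y}
  | .ne x y => {x, y}
  | .rel _ a => Set.range a
  | .pred _ a => Set.range a
  | .star φ ψ => φ.vars ∪ ψ.vars
  | .ex x φ => insert x φ.vars

/-- Predicate-free formulas. -/
def PredFree : SLR Rel ar Pr pa → Prop
  | .pred _ _ => False
  | .star φ ψ => φ.PredFree ∧ ψ.PredFree
  | .ex _ φ => φ.PredFree
  | _ => True

/-- Quantifier- and predicate-free (qpf) formulas. -/
def QPF : SLR Rel ar Pr pa → Prop
  | .pred _ _ => False
  | .ex _ _ => False
  | .star φ ψ => φ.QPF ∧ ψ.QPF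
  | _ => True

/-- Formulas containing only relation atoms. -/
def RelOnly : SLR Rel ar Pr pa → Prop
  | .rel _ _ => True
  | .star φ ψ => φ.RelOnly ∧ ψ.RelOnly
  | _ => False

/-- Formulas containing only equality atoms (and `emp`). -/
def EqOnly : SLR Rel ar Pr pa → Prop
  | .emp => True
  | .eq _ _ => True
  | .star φ ψ => φ.EqOnly ∧ ψ.EqOnly
  | _ => False

/-- Equality-free formulas: no equality atom and no predicate atom in which the same
variable occurs twice. -/
def EqFreeF : SLR Rel ar Pr pa → Prop
  | .eq _ _ => False
  | .pred _ a => Function.Injective a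
  | .star φ ψ => φ.EqFreeF ∧ ψ.EqFreeF
  | .ex _ φ => φ.EqFreeF
  | _ => True

/-- The number of predicate atoms occurring in a formula. -/
def npred : SLR Rel ar Pr pa → ℕ
  | .pred _ _ => 1
  | .star φ ψ => φ.npred + ψ.npred
  | .ex _ φ => φ.npred
  | _ => 0

/-- The number of relation atoms occurring in a formula. -/
def nrel : SLR Rel ar Pr pa → ℕ
  | .rel _ _ => 1
  | .star φ ψ => φ.nrel + ψ.nrel
  | .ex _ φ => φ.nrel
  | _ => 0

/-- The set of relation symbols occurring in a formula. -/
def rels : SLR Rel ar Pr pa → Set Rel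
  | .rel r _ => {r}
  | .star φ ψ => φ.rels ∪ ψ.rels
  | .ex _ φ => φ.rels
  | _ => ∅

/-- The set of predicate symbols occurring in a formula. -/
def preds : SLR Rel ar Pr pa → Set Pr
  | .pred A _ => {A}
  | .star φ ψ => φ.preds ∪ ψ.preds
  | .ex _ φ => φ.preds
  | _ => ∅

/-- The quantifier-free matrix of a formula (erasing all existential quantifiers). -/
def matrix : SLR Rel ar Pr pa → SLR Rel ar Pr pa
  | .ex _ φ => φ.matrix
  | .star φ ψ => .star φ.matrix ψ.matrix
  | φ => φ

/-- The list of bound variables of a formula. -/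
def binders : SLR Rel ar Pr pa → List ℕ
  | .ex x φ => x :: φ.binders
  | .star φ ψ => φ.binders ++ ψ.binders
  | _ => []

/-- A formula is well-named iff its bound variables are pairwise distinct and distinct
from its free variables.  For a well-named formula, the matrix faithfully represents
the prenex form. -/
def WellNamed (χ : SLR Rel ar Pr pa) : Prop :=
  χ.binders.Nodup ∧ ∀ x ∈ χ.binders, x ∉ χ.fv

/-- The disequality `x ≠ y` occurs in the formula (as an unordered pair). -/
def neOccurs : SLR Rel ar Pr pa → ℕ → ℕ → Prop
  | .ne a b, x, y => (a = x ∧ b = y) ∨ (a = y ∧ b = x)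
  | .star φ ψ, x, y => φ.neOccurs x y ∨ ψ.neOccurs x y
  | .ex _ φ, x, y => φ.neOccurs x y
  | _, _, _ => False

/-- The equality `x = y` occurs in the formula (as an unordered pair). -/
def eqOccurs : SLR Rel ar Pr pa → ℕ → ℕ → Prop
  | .eq a b, x, y => (a = x ∧ b = y) ∨ (a = y ∧ b = x)
  | .star φ ψ, x, y => φ.eqOccurs x y ∨ ψ.eqOccurs x y
  | .ex _ φ, x, y => φ.eqOccurs x y
  | _, _, _ => False

end SLR

/-- The nullary predicate atom `A()` (the arguments are irrelevant when `pa A = 0`). -/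
def natom (A : Pr) : SLR Rel ar Pr pa := .pred A fun _ => 0

/-- Iterated separating conjunction: `starAll φ [χ1, …, χn] = χ1 * (χ2 * … * (χn * φ))`. -/
def starAll (φ : SLR Rel ar Pr pa) : List (SLR Rel ar Pr pa) → SLR Rel ar Pr pa
  | [] => φ
  | χ :: l => .star χ (starAll φ l)

end Defs1

/-- A set of inductive definitions (SID): a finite set of rules `A(0,…,pa A - 1) ← φ`
where the free variables of `φ` are among the parameters `0, …, pa A - 1`. -/
structure SID (Rel : Type) (ar : Rel → ℕ) (Pr : Type) (pa : Pr → ℕ) where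
  rules : Pr → Set (SLR Rel ar Pr pa)
  finite_rules : {p : Pr × SLR Rel ar Pr pa | p.2 ∈ rules p.1}.Finite
  wf : ∀ A, ∀ φ ∈ rules A, SLR.fv φ ⊆ {x | x < pa A}

section Defs2

variable {Rel : Type} {ar : Rel → ℕ} {V : Type} {Pr : Type} {pa : Pr → ℕ}

/-- The empty structure predicate. -/
def EmpS (S : Str Rel ar V) : Prop := ∀ r, S.interp r = ∅

/-- The satisfaction relation of SLR, parameterized by a store and an SID.
A predicate atom `A(y₁,…,yₙ)` is satisfied iff the body of some rule for `A` is
satisfied under the store mapping the parameter `i` to the value of `yᵢ₊₁`. -/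
inductive Sat (Δ : SID Rel ar Pr pa) :
    Str Rel ar V → (ℕ → V) → SLR Rel ar Pr pa → Prop where
  | emp {S : Str Rel ar V} {s : ℕ → V} : EmpS S → Sat Δ S s .emp
  | eq {S : Str Rel ar V} {s : ℕ → V} {x y : ℕ} :
      EmpS S → s x = s y → Sat Δ S s (.eq x y)
  | ne {S : Str Rel ar V} {s : ℕ → V} {x y : ℕ} :
      EmpS S → s x ≠ s y → Sat Δ S s (.ne x y)
  | rel {S : Str Rel ar V} {s : ℕ → V} {r : Rel} {a : Fin (ar r) → ℕ} :
      S.interp r = {fun i => s (a i)} → (∀ r', r' ≠ r → S.interp r' = ∅) →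
      Sat Δ S s (.rel r a)
  | pred {S : Str Rel ar V} {s : ℕ → V} {A : Pr} {a : Fin (pa A) → ℕ}
      {body : SLR Rel ar Pr pa} :
      body ∈ Δ.rules A →
      Sat Δ S (fun n => if h : n < pa A then s (a ⟨n, h⟩) else s n) body →
      Sat Δ S s (.pred A a)
  | star {S1 S2 : Str Rel ar V} {s : ℕ → V} {φ ψ : SLR Rel ar Pr pa} :
      LocDisj S1 S2 → Sat Δ S1 s φ → Sat Δ S2 s ψ →
      Sat Δ (S1.comp S2) s (.star φ ψ)
  | ex {S : Str Rel ar V} {s : ℕ → V} {x : ℕ} {φ : SLR Rel ar Pr pa} (u : V) :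
      Sat Δ S (Function.update s x u) φ → Sat Δ S s (.ex x φ)

/-- The set of `Δ`-models of a sentence (over universe `V`). -/
def SMod (Δ : SID Rel ar Pr pa) (φ : SLR Rel ar Pr pa) : Set (Str Rel ar V) :=
  { S | ∃ s : ℕ → V, Sat Δ S s φ }

/-- `IsSubst f φ φ'` holds iff `φ'` is obtained from `φ` by the capture-avoiding
substitution of `f x` for each free variable `x`, the bound variables being renamed
to avoid clashes. -/
inductive IsSubst : (ℕ → ℕ) → SLR Rel ar Pr pa → SLR Rel ar Pr pa → Prop where
  | emp {f : ℕ → ℕ} : IsSubst f .emp .emp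
  | eq {f : ℕ → ℕ} {x y : ℕ} : IsSubst f (.eq x y) (.eq (f x) (f y))
  | ne {f : ℕ → ℕ} {x y : ℕ} : IsSubst f (.ne x y) (.ne (f x) (f y))
  | rel {f : ℕ → ℕ} {r : Rel} {a : Fin (ar r) → ℕ} :
      IsSubst f (.rel r a) (.rel r (f ∘ a))
  | pred {f : ℕ → ℕ} {A : Pr} {a : Fin (pa A) → ℕ} :
      IsSubst f (.pred A a) (.pred A (f ∘ a))
  | star {f : ℕ → ℕ} {φ ψ φ' ψ' : SLR Rel ar Pr pa} :
      IsSubst f φ φ' → IsSubst f ψ ψ' → IsSubst f (.star φ ψ) (.star φ' ψ')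
  | ex {f : ℕ → ℕ} {x z : ℕ} {φ φ' : SLR Rel ar Pr pa} :
      (∀ y ∈ SLR.fv φ, y ≠ x → f y ≠ z) →
      IsSubst (Function.update f x z) φ φ' →
      IsSubst f (.ex x φ) (.ex z φ')

/-- One unfolding step: replace one predicate atom `A(y₁,…,yₙ)` by the body of a rule
for `A`, with the parameters substituted by `y₁,…,yₙ` (bound variables renamed to
avoid clashes). -/
inductive Step (Δ : SID Rel ar Pr pa) : SLR Rel ar Pr pa → SLR Rel ar Pr pa → Prop where
  | unfold {A : Pr} {a : Fin (pa A) → ℕ} {body ψ : SLR Rel ar Pr pa} :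
      body ∈ Δ.rules A →
      IsSubst (fun n => if h : n < pa A then a ⟨n, h⟩ else n) body ψ →
      Step Δ (.pred A a) ψ
  | starL {φ φ' ψ : SLR Rel ar Pr pa} : Step Δ φ φ' → Step Δ (.star φ ψ) (.star φ' ψ)
  | starR {φ ψ ψ' : SLR Rel ar Pr pa} : Step Δ ψ ψ' → Step Δ (.star φ ψ) (.star φ ψ')
  | exC {x : ℕ} {φ φ' : SLR Rel ar Pr pa} : Step Δ φ φ' → Step Δ (.ex x φ) (.ex x φ')

/-- `Δ`-unfolding: the reflexive-transitive closure of unfolding steps. -/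
def Unfolds (Δ : SID Rel ar Pr pa) : SLR Rel ar Pr pa → SLR Rel ar Pr pa → Prop :=
  Relation.ReflTransGen (Step Δ)

/-- `x = y` is a logical consequence of `ψ`. -/
def EqConseq (Δ : SID Rel ar Pr pa) (ψ : SLR Rel ar Pr pa) (x y : ℕ) : Prop :=
  ∀ (S : Str Rel ar V) (s : ℕ → V), Sat Δ S s ψ → s x = s y

/-- A store is canonical for `ψ` iff it identifies only variables that are equated as a
logical consequence of `ψ`. -/
def CanonicalStore (Δ : SID Rel ar Pr pa) (s : ℕ → V) (ψ : SLR Rel ar Pr pa) : Prop :=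
  ∀ x ∈ ψ.fv, ∀ y ∈ ψ.fv, s x = s y → EqConseq (V := V) Δ ψ x y

/-- `(S, d)` is a rich canonical `Δ`-model of `φ`: for some complete `Δ`-unfolding of
`φ` into a well-named predicate-free formula `χ` (i.e. of the form `∃x⃗.ψ` with `ψ` qpf,
up to hoisting of quantifiers) and some store canonical for the matrix `ψ`, the
structure `S` satisfies `ψ` and `d` records the disequalities of `ψ` under the store. -/
def RichCanonical (Δ : SID Rel ar Pr pa) (φ : SLR Rel ar Pr pa)
    (S : Str Rel ar V) (d : V → V → Prop) : Prop :=
  ∃ χ : SLR Rel ar Pr pa, Unfolds Δ φ χ ∧ χ.PredFree ∧ χ.WellNamed ∧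
    ∃ s : ℕ → V, CanonicalStore Δ s χ.matrix ∧ Sat Δ S s χ.matrix ∧
      ∀ u v : V, d u v ↔ ∃ x y : ℕ, s x = u ∧ s y = v ∧ χ.matrix.neOccurs x y

/-- The set of canonical `Δ`-models of `φ`. -/
def Canonical (Δ : SID Rel ar Pr pa) (φ : SLR Rel ar Pr pa) : Set (Str Rel ar V) :=
  { S | ∃ d, RichCanonical Δ φ S d }

/-- `S1` is a substructure of `S2`: its interpretation consists exactly of the tuples of
`S2` all of whose elements belong to the support of `S1`. -/
def Substr (S1 S2 : Str Rel ar V) : Prop :=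
  ∀ r, S1.interp r = { t ∈ S2.interp r | ∀ i, t i ∈ S1.supp }

/-- Two elements touch iff they occur in a common tuple. -/
def Touching (S : Str Rel ar V) (u v : V) : Prop :=
  ∃ (r : Rel) (t : Fin (ar r) → V), t ∈ S.interp r ∧ (∃ i, t i = u) ∧ ∃ j, t j = v

/-- A structure is connected iff any two support elements are joined by a path of
pairwise overlapping tuples. -/
def ConnectedS (S : Str Rel ar V) : Prop :=
  ∀ u ∈ S.supp, ∀ v ∈ S.supp, Relation.ReflTransGen (Touching S) u v

/-- `S1` is a maximally connected substructure of `S2`. -/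
def MaxConn (S1 S2 : Str Rel ar V) : Prop :=
  Substr S1 S2 ∧ ConnectedS S1 ∧
    ∀ S1' : Str Rel ar V, Substr S1' S2 → ConnectedS S1' → Substr S1 S1' → S1 = S1'

/-- The set of maximally connected substructures of a structure. -/
def split (S : Str Rel ar V) : Set (Str Rel ar V) := { S' | MaxConn S' S }

/-- `split`, lifted to sets of structures. -/
def splitSet (𝒮 : Set (Str Rel ar V)) : Set (Str Rel ar V) := ⋃ S ∈ 𝒮, split S

/-- The smallest equivalence relation containing `R`. -/
def EqvOf (R : V → V → Prop) (a b : V) : Prop :=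
  ∀ E : V → V → Prop, Equivalence E → (∀ x y, R x y → E x y) → E a b

/-- An equivalence relation is compatible with a structure iff any two distinct tuples of
the interpretation of a relation symbol differ at some position modulo the relation. -/
def CompatibleE (S : Str Rel ar V) (E : V → V → Prop) : Prop :=
  ∀ r, ∀ t1 ∈ S.interp r, ∀ t2 ∈ S.interp r, t1 ≠ t2 → ∃ i, ¬ E (t1 i) (t2 i)

/-- The image of a structure under a map on elements. -/
def mapStr (h : V → V) (S : Str Rel ar V) : Str Rel ar V where
  interp r := (fun t => h ∘ t) '' S.interp r
  finite_interp r := (S.finite_interp r).image _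
  finite_active := by
    refine S.finite_active.subset ?_
    intro r hr
    simp only [Set.mem_setOf_eq, ne_eq] at hr ⊢
    intro h0
    exact hr (by rw [h0, Set.image_empty])

/-- `S'` is (a copy over `V` of) the quotient of `S` by the equivalence relation `E`. -/
def QuotBy (S : Str Rel ar V) (E : V → V → Prop) (S' : Str Rel ar V) : Prop :=
  ∃ h : V → V, (∀ u ∈ S.supp, ∀ v ∈ S.supp, (E u v ↔ h u = h v)) ∧ S' = mapStr h S

/-- `S'` is an isomorphic copy of `S` (over the same universe `V`). -/
def IsoCopy (S S' : Str Rel ar V) : Prop :=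
  ∃ h : V → V, Set.InjOn h S.supp ∧ S' = mapStr h S

/-- A matching: a set of pairs such that distinct pairs share no element. -/
def IsMatching (M : Set (V × V)) : Prop :=
  ∀ p ∈ M, ∀ q ∈ M, p ≠ q → ({p.1, p.2} ∩ {q.1, q.2} : Set V) = ∅

/-- The set of internal fusions of a structure: quotients by compatible equivalence
relations (up to isomorphism). -/
def IntFusion (S : Str Rel ar V) : Set (Str Rel ar V) :=
  { S' | ∃ E : V → V → Prop, Equivalence E ∧ CompatibleE S E ∧ QuotBy S E S' }

/-- Internal fusions of members of a set of structures. -/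
def ifSet (𝒮 : Set (Str Rel ar V)) : Set (Str Rel ar V) := ⋃ S ∈ 𝒮, IntFusion S

/-- Internal fusions of a rich canonical model: quotients by compatible equivalence
relations that do not violate the disequality relation `d`. -/
def SIntFusion (S : Str Rel ar V) (d : V → V → Prop) : Set (Str Rel ar V) :=
  { S' | ∃ E : V → V → Prop, Equivalence E ∧ CompatibleE S E ∧
      (∀ u v, d u v → ¬ E u v) ∧ QuotBy S E S' }

/-- External fusions of two structures: quotients of the composition of disjoint
isomorphic copies by the smallest equivalence relation containing a nonempty matching
between supports that is compatible with the composition. -/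
def ExtFusion (S1 S2 : Str Rel ar V) : Set (Str Rel ar V) :=
  { S' | ∃ (S1' S2' : Str Rel ar V) (M : Set (V × V)),
      IsoCopy S1 S1' ∧ IsoCopy S2 S2' ∧ S1'.supp ∩ S2'.supp = ∅ ∧
      M.Nonempty ∧ IsMatching M ∧ (∀ p ∈ M, p.1 ∈ S1'.supp ∧ p.2 ∈ S2'.supp) ∧
      CompatibleE (S1'.comp S2') (EqvOf fun a b => (a, b) ∈ M) ∧
      QuotBy (S1'.comp S2') (EqvOf fun a b => (a, b) ∈ M) S' }

/-- Single-pair external fusions: external fusions whose matching is a single pair. -/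
def ExtFusion1 (S1 S2 : Str Rel ar V) : Set (Str Rel ar V) :=
  { S' | ∃ (S1' S2' : Str Rel ar V) (M : Set (V × V)),
      IsoCopy S1 S1' ∧ IsoCopy S2 S2' ∧ S1'.supp ∩ S2'.supp = ∅ ∧
      (∃ p : V × V, M = {p}) ∧ IsMatching M ∧
      (∀ p ∈ M, p.1 ∈ S1'.supp ∧ p.2 ∈ S2'.supp) ∧
      CompatibleE (S1'.comp S2') (EqvOf fun a b => (a, b) ∈ M) ∧
      QuotBy (S1'.comp S2') (EqvOf fun a b => (a, b) ∈ M) S' }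

/-- Closure of a set of structures under external fusions (structures being identified
up to isomorphism). -/
inductive efStar (𝒮 : Set (Str Rel ar V)) : Str Rel ar V → Prop where
  | base {S : Str Rel ar V} : S ∈ 𝒮 → efStar 𝒮 S
  | iso {S S' : Str Rel ar V} : efStar 𝒮 S → IsoCopy S S' → efStar 𝒮 S'
  | fuse {S1 S2 S : Str Rel ar V} :
      efStar 𝒮 S1 → efStar 𝒮 S2 → S ∈ ExtFusion S1 S2 → efStar 𝒮 S

def efStarSet (𝒮 : Set (Str Rel ar V)) : Set (Str Rel ar V) := { S | efStar 𝒮 S }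

/-- Closure of a set of structures under single-pair external fusions. -/
inductive ef1Star (𝒮 : Set (Str Rel ar V)) : Str Rel ar V → Prop where
  | base {S : Str Rel ar V} : S ∈ 𝒮 → ef1Star 𝒮 S
  | iso {S S' : Str Rel ar V} : ef1Star 𝒮 S → IsoCopy S S' → ef1Star 𝒮 S'
  | fuse {S1 S2 S : Str Rel ar V} :
      ef1Star 𝒮 S1 → ef1Star 𝒮 S2 → S ∈ ExtFusion1 S1 S2 → ef1Star 𝒮 S

def ef1StarSet (𝒮 : Set (Str Rel ar V)) : Set (Str Rel ar V) := { S | ef1Star 𝒮 S }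

/-- Closure of a set of structures under both internal and external fusions. -/
inductive iefStar (𝒮 : Set (Str Rel ar V)) : Str Rel ar V → Prop where
  | base {S : Str Rel ar V} : S ∈ 𝒮 → iefStar 𝒮 S
  | iso {S S' : Str Rel ar V} : iefStar 𝒮 S → IsoCopy S S' → iefStar 𝒮 S'
  | fuse {S1 S2 S : Str Rel ar V} :
      iefStar 𝒮 S1 → iefStar 𝒮 S2 → S ∈ ExtFusion S1 S2 → iefStar 𝒮 S
  | intf {S1 S : Str Rel ar V} : iefStar 𝒮 S1 → S ∈ IntFusion S1 → iefStar 𝒮 S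

def iefStarSet (𝒮 : Set (Str Rel ar V)) : Set (Str Rel ar V) := { S | iefStar 𝒮 S }

/-- The color of an element: the set of relation symbols whose interpretation contains
the constant tuple at this element. -/
def color (S : Str Rel ar V) (u : V) : Set Rel :=
  { r : Rel | (fun _ => u) ∈ S.interp r }

/-- The multiplicity of a color in the multiset color abstraction of a structure. -/
noncomputable def colorMult (S : Str Rel ar V) (C : Set Rel) : ℕ :=
  {u ∈ S.supp | color S u = C}.ncard

/-- The `k`-multiset color abstraction of a structure: the sub-multisets of cardinality
at most `k` of the multiset of colors of its support elements. -/
noncomputable def MkOf (k : ℕ) (S : Str Rel ar V) : Set (Multiset (Set Rel)) :=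
  { M | Multiset.card M ≤ k ∧
      ∀ C : Set Rel, @Multiset.count _ (Classical.decEq _) C M ≤ colorMult S C }

/-- The `k`-multiset color abstraction, lifted to sets of structures. -/
noncomputable def MkSet (k : ℕ) (𝒮 : Set (Str Rel ar V)) : Set (Multiset (Set Rel)) :=
  ⋃ S ∈ 𝒮, MkOf k S

/-- A set of structures conforms to an RGB color scheme iff (1) in any member, if some
support element has a red color then all other support elements have blue colors, and
(2) in any external fusion of members, every green color occurs at most twice. -/
def Conforms (𝒮 : Set (Str Rel ar V)) (P : RGB Rel) : Prop :=
  (∀ S ∈ 𝒮, ∀ u ∈ S.supp, color S u ∈ P.red →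
      ∀ v ∈ S.supp, v ≠ u → color S v ∈ P.blue) ∧
  (∀ S ∈ efStarSet 𝒮, ∀ C ∈ P.green, colorMult S C ≤ 2)

/-- Type `R` structures: only blue and red colors, with exactly one red element. -/
def TypeR (P : RGB Rel) (S : Str Rel ar V) : Prop :=
  (∀ u ∈ S.supp, color S u ∈ P.blue ∨ color S u ∈ P.red) ∧
  {u ∈ S.supp | color S u ∈ P.red}.ncard = 1

/-- Type `G` structures: only blue and green colors, with at least one green element. -/
def TypeG (P : RGB Rel) (S : Str Rel ar V) : Prop :=
  (∀ u ∈ S.supp, color S u ∈ P.blue ∨ color S u ∈ P.green) ∧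
  {u ∈ S.supp | color S u ∈ P.green}.Nonempty

/-- Type `B` structures: only blue colors. -/
def TypeB (P : RGB Rel) (S : Str Rel ar V) : Prop :=
  ∀ u ∈ S.supp, color S u ∈ P.blue

namespace SID

/-- The set of predicate symbols occurring in an SID. -/
def predsOf (Δ : SID Rel ar Pr pa) : Set Pr :=
  {A | Δ.rules A ≠ ∅} ∪ ⋃ A, ⋃ φ ∈ Δ.rules A, SLR.preds φ

/-- The set of relation symbols occurring in an SID. -/
def relsOf (Δ : SID Rel ar Pr pa) : Set Rel :=
  ⋃ A, ⋃ φ ∈ Δ.rules A, SLR.rels φ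

/-- The number of predicate symbols occurring in an SID. -/
noncomputable def Pcount (Δ : SID Rel ar Pr pa) : ℕ := Δ.predsOf.ncard

/-- The number of relation symbols occurring in an SID. -/
noncomputable def Rcount (Δ : SID Rel ar Pr pa) : ℕ := Δ.relsOf.ncard

/-- The maximum number of variables (free or existentially quantified) occurring in a
rule of the SID. -/
noncomputable def maxvar (Δ : SID Rel ar Pr pa) : ℕ :=
  sSup { n | ∃ A, ∃ φ ∈ Δ.rules A, n = ({x | x < pa A} ∪ SLR.vars φ).ncard }

/-- The maximum number of predicate atoms occurring in a rule of the SID. -/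
noncomputable def maxpredatoms (Δ : SID Rel ar Pr pa) : ℕ :=
  sSup { n | ∃ A, ∃ φ ∈ Δ.rules A, n = SLR.npred φ }

/-- The maximum number of relation atoms occurring in a rule of the SID. -/
noncomputable def maxrelatoms (Δ : SID Rel ar Pr pa) : ℕ :=
  sSup { n | ∃ A, ∃ φ ∈ Δ.rules A, n = SLR.nrel φ }

/-- The maximum arity of a relation symbol occurring in the SID. -/
noncomputable def maxrelarity (Δ : SID Rel ar Pr pa) : ℕ :=
  sSup { n | ∃ r ∈ Δ.relsOf, n = ar r }

/-- The maximum arity of a predicate symbol occurring in the SID. -/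
noncomputable def maxpredarity (Δ : SID Rel ar Pr pa) : ℕ :=
  sSup { n | ∃ A ∈ Δ.predsOf, n = pa A }

/-- An SID is equality-free iff all its rules are equality-free. -/
def EqFree (Δ : SID Rel ar Pr pa) : Prop :=
  ∀ A, ∀ φ ∈ Δ.rules A, SLR.EqFreeF φ

end SID

/-- An SID is all-satisfiable for a nullary predicate `A` iff every predicate-free
outcome of a complete unfolding of `A` is satisfiable. -/
def AllSat (Δ : SID Rel ar Pr pa) (A : Pr) : Prop :=
  ∀ χ : SLR Rel ar Pr pa, Unfolds Δ (natom A) χ → χ.PredFree →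
    ∃ (S : Str Rel ar V) (s : ℕ → V), Sat Δ S s χ

/-- An SID is expandable for a nullary predicate `A`: any finite family of pairwise
disjoint canonical models embeds, as a substructure, into a rich canonical model, in a
way that neither disequalities nor overlapping tuples connect two distinct members. -/
def Expandable (Δ : SID Rel ar Pr pa) (A : Pr) : Prop :=
  ∀ (n : ℕ) (Ss : Fin n → Str Rel ar V),
    (∀ i, Ss i ∈ Canonical (V := V) Δ (natom A)) →
    (∀ i j, i ≠ j → (Ss i).supp ∩ (Ss j).supp = ∅) →
    ∃ (S : Str Rel ar V) (d : V → V → Prop),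
      RichCanonical Δ (natom A) S d ∧
      Substr (bigComp Ss) S ∧
      (∀ i j : Fin n, i < j → ∀ u ∈ (Ss i).supp, ∀ v ∈ (Ss j).supp, ¬ d u v) ∧
      ¬ ∃ (r : Rel) (t1 t2 : Fin (ar r) → V) (i j : Fin n),
          t1 ∈ S.interp r ∧ t2 ∈ S.interp r ∧ i < j ∧
          (∃ k, t1 k ∈ (Ss i).supp) ∧ (∃ k, t2 k ∈ (Ss j).supp) ∧ ∃ k l, t1 k = t2 l

/-- The set of structures obtained by internal fusion of rich canonical `Δ`-models. -/
def sifSet (Δ : SID Rel ar Pr pa) (φ : SLR Rel ar Pr pa) : Set (Str Rel ar V) :=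
  { S' | ∃ (S : Str Rel ar V) (d : V → V → Prop),
      RichCanonical Δ φ S d ∧ S' ∈ SIntFusion S d }

end Defs2

end SLRTW
namespace SLRTW

section Aux1

variable {Rel : Type} {ar : Rel → ℕ} {V : Type} {Pr : Type} {pa : Pr → ℕ}

theorem Str.ext' {S1 S2 : Str Rel ar V} (h : ∀ r, S1.interp r = S2.interp r) :
    S1 = S2 := by
  cases S1; cases S2; simp only [Str.mk.injEq]; exact funext h

theorem Str.mem_supp {S : Str Rel ar V} {r} {t : Fin (ar r) → V} (ht : t ∈ S.interp r)
    (i : Fin (ar r)) : t i ∈ S.supp :=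
  ⟨r, t, ht, i, rfl⟩

theorem Str.supp_finite (S : Str Rel ar V) : S.supp.Finite := by
  have hsub : S.supp ⊆ ⋃ r ∈ {r : Rel | S.interp r ≠ ∅}, ⋃ t ∈ S.interp r, Set.range t := by
    rintro u ⟨r, t, ht, i, rfl⟩
    refine Set.mem_biUnion ?_ (Set.mem_biUnion ht ⟨i, rfl⟩)
    simp only [Set.mem_setOf_eq, ne_eq]
    intro h0
    rw [h0] at ht; exact ht
  exact (S.finite_active.biUnion fun r _ =>
    (S.finite_interp r).biUnion fun t _ => Set.finite_range t).subset hsub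

@[simp] theorem interp_mapStr (h : V → V) (S : Str Rel ar V) (r : Rel) :
    (mapStr h S).interp r = (fun t => h ∘ t) '' S.interp r := rfl

theorem supp_mapStr (h : V → V) (S : Str Rel ar V) :
    (mapStr h S).supp = h '' S.supp := by
  ext u
  constructor
  · rintro ⟨r, t', ⟨t, ht, rfl⟩, i, rfl⟩
    exact ⟨t i, Str.mem_supp ht i, rfl⟩
  · rintro ⟨v, ⟨r, t, ht, i, rfl⟩, rfl⟩
    exact ⟨r, h ∘ t, ⟨t, ht, rfl⟩, i, rfl⟩

theorem mapStr_mapStr (g h : V → V) (S : Str Rel ar V) :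
    mapStr g (mapStr h S) = mapStr (g ∘ h) S := by
  refine Str.ext' fun r => ?_
  simp only [interp_mapStr, Set.image_image]
  rfl

theorem mapStr_congr {g h : V → V} {S : Str Rel ar V} (H : ∀ v ∈ S.supp, g v = h v) :
    mapStr g S = mapStr h S := by
  refine Str.ext' fun r => ?_
  simp only [interp_mapStr]
  apply Set.image_congr
  intro t ht
  funext i
  exact H (t i) (Str.mem_supp ht i)

theorem mapStr_id_on {h : V → V} {S : Str Rel ar V} (H : ∀ v ∈ S.supp, h v = v) :
    mapStr h S = S := by
  refine Str.ext' fun r => ?_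
  simp only [interp_mapStr]
  have : ∀ t ∈ S.interp r, h ∘ t = t := by
    intro t ht; funext i; exact H (t i) (Str.mem_supp ht i)
  rw [Set.image_congr this]; exact Set.image_id _

theorem mapStr_comp (h : V → V) (S1 S2 : Str Rel ar V) :
    mapStr h (S1.comp S2) = (mapStr h S1).comp (mapStr h S2) := by
  refine Str.ext' fun r => ?_
  simp only [interp_mapStr, Str.comp, Set.image_union]

@[simp] theorem interp_comp (S1 S2 : Str Rel ar V) (r : Rel) :
    (S1.comp S2).interp r = S1.interp r ∪ S2.interp r := rfl

theorem supp_comp (S1 S2 : Str Rel ar V) :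
    (S1.comp S2).supp = S1.supp ∪ S2.supp := by
  ext u
  constructor
  · rintro ⟨r, t, ht, i, rfl⟩
    rcases ht with ht | ht
    · exact Or.inl ⟨r, t, ht, i, rfl⟩
    · exact Or.inr ⟨r, t, ht, i, rfl⟩
  · rintro (⟨r, t, ht, i, rfl⟩ | ⟨r, t, ht, i, rfl⟩)
    · exact ⟨r, t, Or.inl ht, i, rfl⟩
    · exact ⟨r, t, Or.inr ht, i, rfl⟩

@[simp] theorem interp_bigComp {n : ℕ} (Ss : Fin n → Str Rel ar V) (r : Rel) :
    (bigComp Ss).interp r = ⋃ i, (Ss i).interp r := rfl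

theorem supp_bigComp {n : ℕ} (Ss : Fin n → Str Rel ar V) :
    (bigComp Ss).supp = ⋃ i, (Ss i).supp := by
  ext u
  constructor
  · rintro ⟨r, t, ht, i, rfl⟩
    rw [interp_bigComp, Set.mem_iUnion] at ht
    obtain ⟨j, hj⟩ := ht
    exact Set.mem_iUnion.mpr ⟨j, r, t, hj, i, rfl⟩
  · intro hu
    rw [Set.mem_iUnion] at hu
    obtain ⟨j, r, t, ht, i, rfl⟩ := hu
    exact ⟨r, t, Set.mem_iUnion.mpr ⟨j, ht⟩, i, rfl⟩

theorem bigComp_one (S : Str Rel ar V) : bigComp (fun _ : Fin 1 => S) = S :=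
  Str.ext' fun r => by simp only [interp_bigComp, Set.iUnion_const]

theorem bigComp_addCases {n1 n2 : ℕ} (Ss1 : Fin n1 → Str Rel ar V)
    (Ss2 : Fin n2 → Str Rel ar V) :
    bigComp (Fin.addCases Ss1 Ss2 : Fin (n1 + n2) → Str Rel ar V) =
      (bigComp Ss1).comp (bigComp Ss2) := by
  refine Str.ext' fun r => ?_
  simp only [interp_bigComp, interp_comp]
  ext t
  simp only [Set.mem_iUnion, Set.mem_union]
  constructor
  · rintro ⟨i, hi⟩
    refine Fin.addCases (fun i1 hi1 => ?_) (fun i2 hi2 => ?_) i hi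
    · rw [Fin.addCases_left] at hi1; exact Or.inl ⟨i1, hi1⟩
    · rw [Fin.addCases_right] at hi2; exact Or.inr ⟨i2, hi2⟩
  · rintro (⟨i1, h1⟩ | ⟨i2, h2⟩)
    · exact ⟨Fin.castAdd n2 i1, by rwa [Fin.addCases_left]⟩
    · exact ⟨Fin.natAdd n1 i2, by rwa [Fin.addCases_right]⟩

/-- Fresh injection: an injection on a finite set whose image avoids a finite set. -/
theorem exists_injOn_avoid [Infinite V] {P F : Set V} (hP : P.Finite) (hF : F.Finite) :
    ∃ g : V → V, Set.InjOn g P ∧ (g '' P) ∩ F = ∅ := by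
  classical
  have hinf : (Set.univ \ F : Set V).Infinite := Set.Infinite.diff (Set.infinite_univ) hF
  obtain ⟨t, htsub, htcard⟩ := hinf.exists_subset_card_eq hP.toFinset.card
  have e : hP.toFinset ≃ t := Finset.equivOfCardEq htcard.symm
  refine ⟨fun v => if hv : v ∈ hP.toFinset then (e ⟨v, hv⟩ : V) else v, ?_, ?_⟩
  · intro a ha b hb hab
    have ha' : a ∈ hP.toFinset := hP.mem_toFinset.mpr ha
    have hb' : b ∈ hP.toFinset := hP.mem_toFinset.mpr hb
    simp only [dif_pos ha', dif_pos hb'] at hab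
    have := e.injective (Subtype.ext hab)
    exact congrArg Subtype.val this
  · apply Set.eq_empty_iff_forall_notMem.mpr
    rintro v ⟨⟨w, hw, rfl⟩, hvF⟩
    have hw' : w ∈ hP.toFinset := hP.mem_toFinset.mpr hw
    simp only [dif_pos hw'] at hvF
    have : (e ⟨w, hw'⟩ : V) ∈ (t : Set V) := (e ⟨w, hw'⟩).2
    have := htsub this
    exact this.2 hvF

theorem SLR.fv_finite (φ : SLR Rel ar Pr pa) : φ.fv.Finite := by
  induction φ with
  | emp => exact Set.finite_empty
  | eq x y => exact (Set.finite_singleton y).insert x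
  | ne x y => exact (Set.finite_singleton y).insert x
  | rel r a => exact Set.finite_range a
  | pred A a => exact Set.finite_range a
  | star φ ψ ih1 ih2 => exact ih1.union ih2
  | ex x φ ih => exact ih.diff

end Aux1

end SLRTW

namespace SLRTW

section Aux2

variable {Rel : Type} {ar : Rel → ℕ} {V : Type} {Pr : Type} {pa : Pr → ℕ}
variable {Δ : SID Rel ar Pr pa}

theorem empS_mapStr {S : Str Rel ar V} (h : EmpS S) (g : V → V) : EmpS (mapStr g S) := by
  intro r; rw [interp_mapStr, h r, Set.image_empty]

/-- Satisfaction only depends on the store on free variables. -/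
theorem sat_congr_store' {S : Str Rel ar V} {s : ℕ → V} {φ : SLR Rel ar Pr pa}
    (h : Sat Δ S s φ) : ∀ s' : ℕ → V, (∀ x ∈ φ.fv, s x = s' x) → Sat Δ S s' φ := by
  induction h with
  | emp he => exact fun s' _ => Sat.emp he
  | @eq S s x y he hxy =>
    intro s' hs
    refine Sat.eq he ?_
    rw [← hs x (by simp [SLR.fv]), ← hs y (by simp [SLR.fv])]; exact hxy
  | @ne S s x y he hxy =>
    intro s' hs
    refine Sat.ne he ?_
    rw [← hs x (by simp [SLR.fv]), ← hs y (by simp [SLR.fv])]; exact hxy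
  | @rel S s r a h1 h2 =>
    intro s' hs
    refine Sat.rel ?_ h2
    rw [h1]
    congr 1
    funext i
    exact hs (a i) ⟨i, rfl⟩
  | @pred S s A a body hbody hsat ih =>
    intro s' hs
    refine Sat.pred hbody (ih _ ?_)
    intro x hx
    have hlt := Δ.wf A body hbody hx
    simp only [Set.mem_setOf_eq] at hlt
    simp only [dif_pos hlt]
    exact hs (a ⟨x, hlt⟩) ⟨⟨x, hlt⟩, rfl⟩
  | @star S1 S2 s φ ψ hdisj h1 h2 ih1 ih2 =>
    intro s' hs
    exact Sat.star hdisj (ih1 _ fun x hx => hs x (Or.inl hx))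
      (ih2 _ fun x hx => hs x (Or.inr hx))
  | @ex S s x φ u hsat ih =>
    intro s' hs
    refine Sat.ex u (ih _ ?_)
    intro y hy
    rcases Classical.em (y = x) with rfl | hne
    · simp [Function.update]
    · simp only [Function.update, dif_neg hne]
      exact hs y ⟨hy, hne⟩

theorem sat_congr_store {S : Str Rel ar V} {s s' : ℕ → V} {φ : SLR Rel ar Pr pa}
    (h : Sat Δ S s φ) (hs : ∀ x ∈ φ.fv, s x = s' x) : Sat Δ S s' φ :=
  sat_congr_store' h s' hs

/-- Transport of satisfaction of a qpf formula along a map on elements. -/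
theorem sat_map_gen {S : Str Rel ar V} {s : ℕ → V} {ψ : SLR Rel ar Pr pa}
    (h : Sat Δ S s ψ) (hq : ψ.QPF) {g : V → V}
    (Hne : ∀ x y, ψ.neOccurs x y → g (s x) ≠ g (s y))
    (Hinj : ∀ r, ∀ t1 ∈ S.interp r, ∀ t2 ∈ S.interp r, g ∘ t1 = g ∘ t2 → t1 = t2) :
    Sat Δ (mapStr g S) (g ∘ s) ψ := by
  induction h with
  | emp he => exact Sat.emp (empS_mapStr he g)
  | eq he hxy => exact Sat.eq (empS_mapStr he g) (congrArg g hxy)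
  | @ne S s x y he hxy =>
    exact Sat.ne (empS_mapStr he g) (Hne x y (Or.inl ⟨rfl, rfl⟩))
  | @rel S s r a h1 h2 =>
    refine Sat.rel ?_ ?_
    · rw [interp_mapStr, h1, Set.image_singleton]; rfl
    · intro r' hr'; rw [interp_mapStr, h2 r' hr', Set.image_empty]
  | @pred S s A a body hbody hsat ih => simp [SLR.QPF] at hq
  | @star S1 S2 s φ ψ hdisj h1 h2 ih1 ih2 =>
    rw [mapStr_comp]
    refine Sat.star ?_
      (ih1 hq.1 (fun x y hocc => Hne x y (Or.inl hocc))
        (fun r t1 m1 t2 m2 => Hinj r t1 (Or.inl m1) t2 (Or.inl m2)))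
      (ih2 hq.2 (fun x y hocc => Hne x y (Or.inr hocc))
        (fun r t1 m1 t2 m2 => Hinj r t1 (Or.inr m1) t2 (Or.inr m2)))
    intro r
    apply Set.eq_empty_iff_forall_notMem.mpr
    rintro t ⟨⟨t1, m1, rfl⟩, ⟨t2, m2, ht2⟩⟩
    have := Hinj r t2 (Or.inr m2) t1 (Or.inl m1) ht2
    subst this
    have := Set.eq_empty_iff_forall_notMem.mp (hdisj r) t2 ⟨m1, m2⟩
    exact this
  | @ex S s x φ u hsat ih => simp [SLR.QPF] at hq

/-- A disequality occurring in a satisfied qpf formula is satisfied. -/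
theorem sat_ne_distinct {S : Str Rel ar V} {s : ℕ → V} {ψ : SLR Rel ar Pr pa} {x y : ℕ}
    (h : Sat Δ S s ψ) (hq : ψ.QPF) (hocc : ψ.neOccurs x y) : s x ≠ s y := by
  induction h with
  | emp he => exact absurd hocc (by simp [SLR.neOccurs])
  | eq he hxy => exact absurd hocc (by simp [SLR.neOccurs])
  | @ne S s a b he hab =>
    rcases hocc with ⟨rfl, rfl⟩ | ⟨rfl, rfl⟩
    · exact hab
    · exact fun h' => hab h'.symm
  | rel h1 h2 => exact absurd hocc (by simp [SLR.neOccurs])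
  | pred hbody hsat ih => simp [SLR.QPF] at hq
  | star hdisj h1 h2 ih1 ih2 =>
    rcases hocc with hocc | hocc
    · exact ih1 hq.1 hocc
    · exact ih2 hq.2 hocc
  | ex u hsat ih => simp [SLR.QPF] at hq

/-- Variables of disequalities in a qpf formula are free. -/
theorem neOccurs_mem_fv {ψ : SLR Rel ar Pr pa} {x y : ℕ} (hq : ψ.QPF)
    (hocc : ψ.neOccurs x y) : x ∈ ψ.fv ∧ y ∈ ψ.fv := by
  induction ψ with
  | emp => exact absurd hocc (by simp [SLR.neOccurs])
  | eq a b => exact absurd hocc (by simp [SLR.neOccurs])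
  | ne a b =>
    rcases hocc with ⟨rfl, rfl⟩ | ⟨rfl, rfl⟩ <;> simp [SLR.fv]
  | rel r a => exact absurd hocc (by simp [SLR.neOccurs])
  | pred A a => exact absurd hocc (by simp [SLR.neOccurs])
  | star φ ψ ih1 ih2 =>
    rcases hocc with hocc | hocc
    · obtain ⟨h1, h2⟩ := ih1 hq.1 hocc; exact ⟨Or.inl h1, Or.inl h2⟩
    · obtain ⟨h1, h2⟩ := ih2 hq.2 hocc; exact ⟨Or.inr h1, Or.inr h2⟩
  | ex a φ ih => simp [SLR.QPF] at hq

/-- Variables of equalities in a qpf formula are free. -/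
theorem eqOccurs_mem_fv {ψ : SLR Rel ar Pr pa} {x y : ℕ} (hq : ψ.QPF)
    (hocc : ψ.eqOccurs x y) : x ∈ ψ.fv ∧ y ∈ ψ.fv := by
  induction ψ with
  | emp => exact absurd hocc (by simp [SLR.eqOccurs])
  | eq a b =>
    rcases hocc with ⟨rfl, rfl⟩ | ⟨rfl, rfl⟩ <;> simp [SLR.fv]
  | ne a b => exact absurd hocc (by simp [SLR.eqOccurs])
  | rel r a => exact absurd hocc (by simp [SLR.eqOccurs])
  | pred A a => exact absurd hocc (by simp [SLR.eqOccurs])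
  | star φ ψ ih1 ih2 =>
    rcases hocc with hocc | hocc
    · obtain ⟨h1, h2⟩ := ih1 hq.1 hocc; exact ⟨Or.inl h1, Or.inl h2⟩
    · obtain ⟨h1, h2⟩ := ih2 hq.2 hocc; exact ⟨Or.inr h1, Or.inr h2⟩
  | ex a φ ih => simp [SLR.QPF] at hq

/-- An equality occurring in a qpf formula is a logical consequence. -/
theorem eqOccurs_conseq {ψ : SLR Rel ar Pr pa} {x y : ℕ} (hq : ψ.QPF)
    (hocc : ψ.eqOccurs x y) : EqConseq (V := V) Δ ψ x y := by
  induction ψ with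
  | emp => exact absurd hocc (by simp [SLR.eqOccurs])
  | eq a b =>
    intro S s hs
    cases hs with
    | eq he hab =>
      rcases hocc with ⟨rfl, rfl⟩ | ⟨rfl, rfl⟩
      · exact hab
      · exact hab.symm
  | ne a b => exact absurd hocc (by simp [SLR.eqOccurs])
  | rel r a => exact absurd hocc (by simp [SLR.eqOccurs])
  | pred A a => exact absurd hocc (by simp [SLR.eqOccurs])
  | star φ ψ ih1 ih2 =>
    intro S s hs
    cases hs with
    | star hdisj h1 h2 =>
      rcases hocc with hocc | hocc
      · exact ih1 hq.1 hocc _ _ h1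
      · exact ih2 hq.2 hocc _ _ h2
  | ex a φ ih => simp [SLR.QPF] at hq

end Aux2

end SLRTW

namespace SLRTW

section Aux3

variable {Rel : Type} {ar : Rel → ℕ} {V : Type} {Pr : Type} {pa : Pr → ℕ}
variable {Δ : SID Rel ar Pr pa}

theorem matrix_qpf {χ : SLR Rel ar Pr pa} (h : χ.PredFree) : χ.matrix.QPF := by
  induction χ with
  | emp => trivial
  | eq x y => trivial
  | ne x y => trivial
  | rel r a => trivial
  | pred A a => exact absurd h (by simp [SLR.PredFree])
  | star φ ψ ih1 ih2 => exact ⟨ih1 h.1, ih2 h.2⟩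
  | ex x φ ih => exact ih h

theorem fv_matrix (χ : SLR Rel ar Pr pa) :
    χ.matrix.fv ⊆ χ.fv ∪ {b | b ∈ χ.binders} := by
  induction χ with
  | emp => simp [SLR.matrix]
  | eq x y => simp [SLR.matrix]
  | ne x y => simp [SLR.matrix]
  | rel r a => simp [SLR.matrix]
  | pred A a => simp [SLR.matrix]
  | star φ ψ ih1 ih2 =>
    intro z hz
    rcases hz with hz | hz
    · rcases ih1 hz with h | h
      · exact Or.inl (Or.inl h)
      · exact Or.inr (by simp [SLR.binders]; exact Or.inl h)
    · rcases ih2 hz with h | h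
      · exact Or.inl (Or.inr h)
      · exact Or.inr (by simp [SLR.binders]; exact Or.inr h)
  | ex x φ ih =>
    intro z hz
    rcases ih hz with h | h
    · rcases Classical.em (z = x) with rfl | hne
      · exact Or.inr (by simp [SLR.binders])
      · exact Or.inl ⟨h, hne⟩
    · exact Or.inr (by simp [SLR.binders]; exact Or.inr h)

theorem sat_of_matrix {S : Str Rel ar V} {s : ℕ → V} {χ : SLR Rel ar Pr pa}
    (h : Sat Δ S s χ.matrix) : Sat Δ S s χ := by
  induction χ generalizing S s with
  | emp => exact h
  | eq x y => exact h
  | ne x y => exact h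
  | rel r a => exact h
  | pred A a => exact h
  | star φ ψ ih1 ih2 =>
    cases h with
    | star hdisj h1 h2 => exact Sat.star hdisj (ih1 h1) (ih2 h2)
  | ex x φ ih =>
    refine Sat.ex (s x) ?_
    rw [Function.update_eq_self]
    exact ih h

theorem isSubst_sat {f : ℕ → ℕ} {φ φ' : SLR Rel ar Pr pa} (hsub : IsSubst f φ φ') :
    ∀ {S : Str Rel ar V} {s : ℕ → V}, Sat Δ S s φ' → Sat Δ S (s ∘ f) φ := by
  induction hsub with
  | emp =>
    intro S s h
    cases h with | emp he => exact Sat.emp he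
  | @eq f x y =>
    intro S s h
    cases h with | eq he hxy => exact Sat.eq he hxy
  | @ne f x y =>
    intro S s h
    cases h with | ne he hxy => exact Sat.ne he hxy
  | @rel f r a =>
    intro S s h
    cases h with | rel h1 h2 => exact Sat.rel h1 h2
  | @pred f A a =>
    intro S s h
    cases h with
    | pred hbody hsat =>
      refine Sat.pred hbody (sat_congr_store hsat ?_)
      intro x hx
      have hlt := Δ.wf _ _ hbody hx
      simp only [Set.mem_setOf_eq] at hlt
      simp only [dif_pos hlt]
      rfl
  | @star f φ ψ φ' ψ' h1 h2 ih1 ih2 =>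
    intro S s h
    cases h with
    | star hdisj hs1 hs2 => exact Sat.star hdisj (ih1 hs1) (ih2 hs2)
  | @ex f x z φ φ' hcap hsub ih =>
    intro S s h
    cases h with
    | ex u hsat =>
      refine Sat.ex u (sat_congr_store (ih hsat) ?_)
      intro y hy
      rcases Classical.em (y = x) with rfl | hne
      · simp [Function.comp, Function.update_self]
      · have hfy : f y ≠ z := hcap y hy hne
        simp [Function.comp, Function.update, hne, hfy]

theorem step_sat {φ φ' : SLR Rel ar Pr pa} (hst : Step Δ φ φ') :
    ∀ {S : Str Rel ar V} {s : ℕ → V}, Sat Δ S s φ' → Sat Δ S s φ := by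
  induction hst with
  | @unfold A a body ψ hbody hsub =>
    intro S s h
    refine Sat.pred hbody (sat_congr_store (isSubst_sat hsub h) ?_)
    intro x hx
    simp only [Function.comp]
    rcases Classical.em (x < pa A) with hlt | hlt
    · simp only [dif_pos hlt]
    · simp only [dif_neg hlt]
  | starL h ih =>
    intro S s hs
    cases hs with
    | star hdisj h1 h2 => exact Sat.star hdisj (ih h1) h2
  | starR h ih =>
    intro S s hs
    cases hs with
    | star hdisj h1 h2 => exact Sat.star hdisj h1 (ih h2)
  | exC h ih =>
    intro S s hs
    cases hs with
    | ex u hsat => exact Sat.ex u (ih hsat)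

theorem unfolds_sat {φ χ : SLR Rel ar Pr pa} (h : Unfolds Δ φ χ) :
    ∀ {S : Str Rel ar V} {s : ℕ → V}, Sat Δ S s χ → Sat Δ S s φ := by
  induction h with
  | refl => exact fun hs => hs
  | tail h1 h2 ih => exact fun hs => ih (step_sat h2 hs)

theorem canonical_subset_smod {φ : SLR Rel ar Pr pa} :
    Canonical (V := V) Δ φ ⊆ SMod (V := V) Δ φ := by
  rintro S ⟨d, χ, hunf, hpf, hwn, s, hcs, hsat, hd⟩
  exact ⟨s, unfolds_sat hunf (sat_of_matrix hsat)⟩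

end Aux3

end SLRTW

namespace SLRTW

section Aux4

variable {Rel : Type} {ar : Rel → ℕ} {V : Type} {Pr : Type} {pa : Pr → ℕ}
variable {Δ : SID Rel ar Pr pa}

theorem unfolds_starL {φ φ' ψ : SLR Rel ar Pr pa} (h : Unfolds Δ φ φ') :
    Unfolds Δ (.star φ ψ) (.star φ' ψ) :=
  Relation.ReflTransGen.lift (fun χ => SLR.star χ ψ) (fun _ _ hs => Step.starL hs) _ _ h

theorem unfolds_starR {φ ψ ψ' : SLR Rel ar Pr pa} (h : Unfolds Δ ψ ψ') :
    Unfolds Δ (.star φ ψ) (.star φ ψ') :=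
  Relation.ReflTransGen.lift (fun χ => SLR.star φ χ) (fun _ _ hs => Step.starR hs) _ _ h

theorem unfolds_star {φ φ' ψ ψ' : SLR Rel ar Pr pa} (h1 : Unfolds Δ φ φ')
    (h2 : Unfolds Δ ψ ψ') : Unfolds Δ (.star φ ψ) (.star φ' ψ') :=
  (unfolds_starL h1).trans (unfolds_starR h2)

theorem unfolds_ex {x : ℕ} {φ φ' : SLR Rel ar Pr pa} (h : Unfolds Δ φ φ') :
    Unfolds Δ (.ex x φ) (.ex x φ') :=
  Relation.ReflTransGen.lift (fun χ => SLR.ex x χ) (fun _ _ hs => Step.exC hs) _ _ h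

/-- Main lemma for canonization: from a satisfaction derivation, extract a complete
well-named unfolding (with fresh binders) together with a satisfying store. -/
theorem sat_unfold {S : Str Rel ar V} {s : ℕ → V} {φ : SLR Rel ar Pr pa}
    (hsat : Sat Δ S s φ) :
    ∀ (f : ℕ → ℕ) (s_out : ℕ → V) (W : Set ℕ), W.Finite → f '' φ.fv ⊆ W →
      (∀ x ∈ φ.fv, s x = s_out (f x)) →
      ∃ (φf χ : SLR Rel ar Pr pa) (s' : ℕ → V),
        IsSubst f φ φf ∧ Unfolds Δ φf χ ∧ χ.PredFree ∧
        χ.binders.Nodup ∧ (∀ b ∈ χ.binders, b ∉ W) ∧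
        χ.fv ⊆ f '' φ.fv ∧
        (∀ y, y ∉ χ.binders → s' y = s_out y) ∧
        Sat Δ S s' χ.matrix := by
  induction hsat with
  | @emp S s he =>
    intro f s_out W hWfin hWsub hfac
    exact ⟨.emp, .emp, s_out, IsSubst.emp, Relation.ReflTransGen.refl, trivial,
      List.nodup_nil, by simp [SLR.binders], by simp [SLR.fv], fun y _ => rfl, Sat.emp he⟩
  | @eq S s x y he hxy =>
    intro f s_out W hWfin hWsub hfac
    refine ⟨.eq (f x) (f y), .eq (f x) (f y), s_out, IsSubst.eq,
      Relation.ReflTransGen.refl, trivial, List.nodup_nil, by simp [SLR.binders],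
      ?_, fun y _ => rfl, ?_⟩
    · intro z hz
      rcases hz with rfl | hz
      · exact ⟨x, by simp [SLR.fv], rfl⟩
      · rw [Set.mem_singleton_iff] at hz; subst hz
        exact ⟨y, by simp [SLR.fv], rfl⟩
    · refine Sat.eq he ?_
      rw [← hfac x (by simp [SLR.fv]), ← hfac y (by simp [SLR.fv])]
      exact hxy
  | @ne S s x y he hxy =>
    intro f s_out W hWfin hWsub hfac
    refine ⟨.ne (f x) (f y), .ne (f x) (f y), s_out, IsSubst.ne,
      Relation.ReflTransGen.refl, trivial, List.nodup_nil, by simp [SLR.binders],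
      ?_, fun y _ => rfl, ?_⟩
    · intro z hz
      rcases hz with rfl | hz
      · exact ⟨x, by simp [SLR.fv], rfl⟩
      · rw [Set.mem_singleton_iff] at hz; subst hz
        exact ⟨y, by simp [SLR.fv], rfl⟩
    · refine Sat.ne he ?_
      rw [← hfac x (by simp [SLR.fv]), ← hfac y (by simp [SLR.fv])]
      exact hxy
  | @rel S s r a h1 h2 =>
    intro f s_out W hWfin hWsub hfac
    refine ⟨.rel r (f ∘ a), .rel r (f ∘ a), s_out, IsSubst.rel,
      Relation.ReflTransGen.refl, trivial, List.nodup_nil, by simp [SLR.binders],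
      ?_, fun y _ => rfl, ?_⟩
    · intro z hz
      obtain ⟨i, rfl⟩ := hz
      exact ⟨a i, ⟨i, rfl⟩, rfl⟩
    · refine Sat.rel ?_ h2
      rw [h1]
      congr 1
      funext i
      exact hfac (a i) ⟨i, rfl⟩
  | @pred S s A a body hbody hsatb ih =>
    intro f s_out W hWfin hWsub hfac
    obtain ⟨ψ0, χ, s', hsub, hunf, hpf, hnd, hav, hfv, hst, hsatm⟩ :=
      ih (fun n => if h : n < pa A then f (a ⟨n, h⟩) else n) s_out W hWfin
        (by
          rintro w ⟨x, hx, rfl⟩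
          have hlt := Δ.wf A body hbody hx
          simp only [Set.mem_setOf_eq] at hlt
          simp only [dif_pos hlt]
          exact hWsub ⟨a ⟨x, hlt⟩, ⟨⟨x, hlt⟩, rfl⟩, rfl⟩)
        (by
          intro x hx
          have hlt := Δ.wf A body hbody hx
          simp only [Set.mem_setOf_eq] at hlt
          simp only [dif_pos hlt]
          exact hfac (a ⟨x, hlt⟩) ⟨⟨x, hlt⟩, rfl⟩)
    refine ⟨.pred A (f ∘ a), χ, s', IsSubst.pred,
      Relation.ReflTransGen.head (Step.unfold hbody hsub) hunf, hpf, hnd, hav, ?_,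
      hst, hsatm⟩
    intro w hw
    obtain ⟨x, hx, rfl⟩ := hfv hw
    have hlt := Δ.wf A body hbody hx
    simp only [Set.mem_setOf_eq] at hlt
    simp only [dif_pos hlt]
    exact ⟨a ⟨x, hlt⟩, ⟨⟨x, hlt⟩, rfl⟩, rfl⟩
  | @star S1 S2 s φ1 φ2 hdisj h1 h2 ih1 ih2 =>
    intro f s_out W hWfin hWsub hfac
    obtain ⟨φf1, χ1, s1', hsub1, hunf1, hpf1, hnd1, hav1, hfv1, hst1, hsat1⟩ :=
      ih1 f s_out W hWfin
        (fun w hw => hWsub (by obtain ⟨x, hx, rfl⟩ := hw; exact ⟨x, Or.inl hx, rfl⟩))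
        (fun x hx => hfac x (Or.inl hx))
    obtain ⟨φf2, χ2, s2', hsub2, hunf2, hpf2, hnd2, hav2, hfv2, hst2, hsat2⟩ :=
      ih2 f s_out (W ∪ {b | b ∈ χ1.binders}) (hWfin.union (χ1.binders.finite_toSet))
        (fun w hw => Or.inl (hWsub
          (by obtain ⟨x, hx, rfl⟩ := hw; exact ⟨x, Or.inr hx, rfl⟩)))
        (fun x hx => hfac x (Or.inr hx))
    classical
    refine ⟨.star φf1 φf2, .star χ1 χ2,
      fun y => if y ∈ χ1.binders then s1' y else s2' y,
      IsSubst.star hsub1 hsub2, unfolds_star hunf1 hunf2, ⟨hpf1, hpf2⟩, ?_, ?_, ?_, ?_, ?_⟩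
    · refine List.Nodup.append hnd1 hnd2 ?_
      intro b hb1 hb2
      exact hav2 b hb2 (Or.inr hb1)
    · intro b hb
      rcases List.mem_append.mp hb with hb | hb
      · exact hav1 b hb
      · exact fun hbW => hav2 b hb (Or.inl hbW)
    · intro w hw
      rcases hw with hw | hw
      · obtain ⟨x, hx, rfl⟩ := hfv1 hw; exact ⟨x, Or.inl hx, rfl⟩
      · obtain ⟨x, hx, rfl⟩ := hfv2 hw; exact ⟨x, Or.inr hx, rfl⟩
    · intro y hy
      dsimp only
      rw [if_neg (fun h => hy (List.mem_append.mpr (Or.inl h)))]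
      exact hst2 y (fun h => hy (List.mem_append.mpr (Or.inr h)))
    · refine Sat.star hdisj ?_ ?_
      · refine sat_congr_store hsat1 ?_
        intro z hz
        by_cases hzb : z ∈ χ1.binders
        · rw [if_pos hzb]
        · rw [if_neg hzb]
          rcases fv_matrix χ1 hz with hz' | hz'
          · have hzW : z ∈ W := hWsub (by
              obtain ⟨x, hx, rfl⟩ := hfv1 hz'; exact ⟨x, Or.inl hx, rfl⟩)
            have hz2 : z ∉ χ2.binders := fun h => hav2 z h (Or.inl hzW)
            rw [hst1 z hzb, hst2 z hz2]
          · exact absurd hz' hzb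
      · refine sat_congr_store hsat2 ?_
        intro z hz
        have hz1 : z ∉ χ1.binders := by
          rcases fv_matrix χ2 hz with hz' | hz'
          · have hzW : z ∈ W := hWsub (by
              obtain ⟨x, hx, rfl⟩ := hfv2 hz'; exact ⟨x, Or.inr hx, rfl⟩)
            exact fun h => hav1 z h hzW
          · exact fun h => hav2 z hz' (Or.inr h)
        rw [if_neg hz1]
  | @ex S s x φ u hsatb ih =>
    intro f s_out W hWfin hWsub hfac
    obtain ⟨z, hz⟩ := Set.Infinite.nonempty
      (Set.Finite.infinite_compl (hWfin.union (((SLR.fv_finite φ).diff (t := {x})).image f)))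
    rw [Set.mem_compl_iff] at hz
    have hzW : z ∉ W := fun h => hz (Or.inl h)
    have hzf : ∀ y ∈ φ.fv, y ≠ x → f y ≠ z := by
      intro y hy hyx hfy
      exact hz (Or.inr ⟨y, ⟨hy, hyx⟩, hfy⟩)
    obtain ⟨φf0, χ0, s', hsub0, hunf0, hpf0, hnd0, hav0, hfv0, hst0, hsat0⟩ :=
      ih (Function.update f x z) (Function.update s_out z u) (W ∪ {z})
        (hWfin.union (Set.finite_singleton z))
        (by
          rintro w ⟨y, hy, rfl⟩
          by_cases hyx : y = x
          · subst hyx; rw [Function.update_self]; exact Or.inr rfl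
          · rw [Function.update_of_ne hyx]
            exact Or.inl (hWsub ⟨y, ⟨hy, hyx⟩, rfl⟩))
        (by
          intro y hy
          by_cases hyx : y = x
          · subst hyx
            rw [Function.update_self, Function.update_self, Function.update_self]
          · rw [Function.update_of_ne hyx, Function.update_of_ne hyx,
              Function.update_of_ne (hzf y hy hyx)]
            exact hfac y ⟨hy, hyx⟩)
    have hzb0 : z ∉ χ0.binders := fun h => hav0 z h (Or.inr rfl)
    refine ⟨.ex z φf0, .ex z χ0, s', IsSubst.ex hzf hsub0, unfolds_ex hunf0, hpf0,
      List.nodup_cons.mpr ⟨hzb0, hnd0⟩, ?_, ?_, ?_, hsat0⟩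
    · intro b hb
      rcases List.mem_cons.mp hb with rfl | hb
      · exact hzW
      · exact fun h => hav0 b hb (Or.inl h)
    · intro w hw
      obtain ⟨hw0, hwz⟩ := hw
      obtain ⟨y, hy, rfl⟩ := hfv0 hw0
      by_cases hyx : y = x
      · subst hyx
        rw [Function.update_self] at hwz
        exact absurd rfl hwz
      · rw [Function.update_of_ne hyx]
        exact ⟨y, ⟨hy, hyx⟩, rfl⟩
    · intro y hy
      rw [hst0 y (fun h => hy (List.mem_cons.mpr (Or.inr h)))]
      exact Function.update_of_ne (fun h => hy (List.mem_cons.mpr (Or.inl h))) u s_out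

end Aux4

end SLRTW

namespace SLRTW

section Aux5

variable {Rel : Type} {ar : Rel → ℕ} {V : Type} {Pr : Type} {pa : Pr → ℕ}
variable {Δ : SID Rel ar Pr pa}

theorem exists_canonical_store [Infinite V] {ψ : SLR Rel ar Pr pa} {S : Str Rel ar V}
    {s_f : ℕ → V} (hsat : Sat Δ S s_f ψ) :
    ∃ (s_c : ℕ → V) (h : V → V),
      (∀ x y : ℕ, s_c x = s_c y → EqConseq (V := V) Δ ψ x y) ∧
      (∀ x ∈ ψ.fv, ∀ y ∈ ψ.fv, EqConseq (V := V) Δ ψ x y → s_c x = s_c y) ∧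
      (∀ x ∈ ψ.fv, h (s_c x) = s_f x) := by
  classical
  have hrefl : ∀ x, EqConseq (V := V) Δ ψ x x := fun _ _ _ _ => rfl
  have hsymm : ∀ {x y}, EqConseq (V := V) Δ ψ x y → EqConseq (V := V) Δ ψ y x :=
    fun h S' s hs => (h S' s hs).symm
  have htrans : ∀ {x y z}, EqConseq (V := V) Δ ψ x y → EqConseq (V := V) Δ ψ y z →
      EqConseq (V := V) Δ ψ x z := fun h1 h2 S' s hs => (h1 S' s hs).trans (h2 S' s hs)
  have hq : ∀ x : ℕ, ∃ n, (n ∈ ψ.fv ∨ n = x) ∧ EqConseq (V := V) Δ ψ n x :=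
    fun x => ⟨x, Or.inr rfl, hrefl x⟩
  have hspec : ∀ x, (Nat.find (hq x) ∈ ψ.fv ∨ Nat.find (hq x) = x) ∧
      EqConseq (V := V) Δ ψ (Nat.find (hq x)) x := fun x => Nat.find_spec (hq x)
  have hrep_mem : ∀ x ∈ ψ.fv, Nat.find (hq x) ∈ ψ.fv := by
    intro x hx
    rcases (hspec x).1 with h | h
    · exact h
    · rw [h]; exact hx
  have hrep_eq : ∀ x ∈ ψ.fv, ∀ y ∈ ψ.fv, EqConseq (V := V) Δ ψ x y →
      Nat.find (hq x) = Nat.find (hq y) := by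
    intro x hx y hy hxy
    apply Nat.le_antisymm
    · exact Nat.find_min' (hq x) ⟨Or.inl (hrep_mem y hy), htrans (hspec y).2 (hsymm hxy)⟩
    · exact Nat.find_min' (hq y) ⟨Or.inl (hrep_mem x hx), htrans (hspec x).2 hxy⟩
  have hforward : ∀ x y : ℕ,
      (Infinite.natEmbedding V) (Nat.find (hq x)) = (Infinite.natEmbedding V) (Nat.find (hq y)) →
      EqConseq (V := V) Δ ψ x y := by
    intro x y hxy
    have hr : Nat.find (hq x) = Nat.find (hq y) := (Infinite.natEmbedding V).injective hxy
    have h2 : EqConseq (V := V) Δ ψ (Nat.find (hq x)) y := by rw [hr]; exact (hspec y).2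
    exact htrans (hsymm (hspec x).2) h2
  refine ⟨fun x => (Infinite.natEmbedding V) (Nat.find (hq x)),
    fun v => if hv : ∃ x, x ∈ ψ.fv ∧ (Infinite.natEmbedding V) (Nat.find (hq x)) = v
      then s_f hv.choose else v,
    hforward, ?_, ?_⟩
  · intro x hx y hy hxy
    exact congrArg _ (hrep_eq x hx y hy hxy)
  · intro x hx
    have hv : ∃ z, z ∈ ψ.fv ∧
        (Infinite.natEmbedding V) (Nat.find (hq z)) =
          (Infinite.natEmbedding V) (Nat.find (hq x)) := ⟨x, hx, rfl⟩
    dsimp only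
    rw [dif_pos hv]
    exact (hforward _ _ hv.choose_spec.2) S s_f hsat

/-- The structure consisting of a single tuple for a single relation symbol. -/
def relStr (r : Rel) (t : Fin (ar r) → V) : Str Rel ar V where
  interp r' := {t' | r' = r ∧ HEq t' t}
  finite_interp r' := by
    classical
    by_cases h : r' = r
    · subst h
      refine (Set.finite_singleton t).subset ?_
      rintro t' ⟨-, ht'⟩
      simp [eq_of_heq ht']
    · convert Set.finite_empty
      apply Set.eq_empty_iff_forall_notMem.mpr
      rintro t' ⟨h', -⟩
      exact h h'
  finite_active := by
    refine (Set.finite_singleton r).subset ?_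
    intro r' hr'
    simp only [Set.mem_setOf_eq, ne_eq] at hr'
    by_contra hne
    apply hr'
    apply Set.eq_empty_iff_forall_notMem.mpr
    rintro t' ⟨h', -⟩
    exact hne h'

theorem relStr_interp_self (r : Rel) (t : Fin (ar r) → V) :
    (relStr r t).interp r = {t} := by
  ext t'
  constructor
  · rintro ⟨-, ht'⟩; exact eq_of_heq ht'
  · rintro rfl; exact ⟨rfl, HEq.rfl⟩

theorem relStr_interp_ne {r r' : Rel} (h : r' ≠ r) (t : Fin (ar r) → V) :
    (relStr r t).interp r' = ∅ := by
  apply Set.eq_empty_iff_forall_notMem.mpr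
  rintro t' ⟨h', -⟩
  exact h h'

/-- Canonization: build a canonical structure mapping onto a given model of a
qpf formula. -/
theorem sat_canonize {ψ : SLR Rel ar Pr pa} {s_c s_f : ℕ → V} {h : V → V}
    (hqg : ψ.QPF)
    (HCf : ∀ x y : ℕ, s_c x = s_c y → EqConseq (V := V) Δ ψ x y)
    (HCb : ∀ x ∈ ψ.fv, ∀ y ∈ ψ.fv, EqConseq (V := V) Δ ψ x y → s_c x = s_c y)
    (HH : ∀ x ∈ ψ.fv, h (s_c x) = s_f x)
    (Hglob : ∃ S : Str Rel ar V, Sat Δ S s_f ψ) :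
    ∀ {ψ0 : SLR Rel ar Pr pa} {S0 : Str Rel ar V}, Sat Δ S0 s_f ψ0 → ψ0.QPF →
      ψ0.fv ⊆ ψ.fv →
      (∀ x y, ψ0.eqOccurs x y → ψ.eqOccurs x y) →
      (∀ x y, ψ0.neOccurs x y → ψ.neOccurs x y) →
      ∃ Sc : Str Rel ar V, Sat Δ Sc s_c ψ0 ∧ mapStr h Sc = S0 ∧
        (∀ r, ∀ t1 ∈ Sc.interp r, ∀ t2 ∈ Sc.interp r, h ∘ t1 = h ∘ t2 → t1 = t2) := by
  intro ψ0
  induction ψ0 with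
  | emp =>
    intro S0 hsat0 _ _ _ _
    cases hsat0 with
    | emp he =>
      refine ⟨S0, Sat.emp he, ?_, ?_⟩
      · refine Str.ext' fun r => ?_
        rw [interp_mapStr, he r, Set.image_empty]
      · intro r t1 ht1
        rw [he r] at ht1
        exact absurd ht1 (Set.notMem_empty t1)
  | eq x y =>
    intro S0 hsat0 _ hsub heqo _
    cases hsat0 with
    | eq he hxy =>
      refine ⟨S0, Sat.eq he ?_, ?_, ?_⟩
      · refine HCb x (hsub (by simp [SLR.fv])) y (hsub (by simp [SLR.fv])) ?_
        exact eqOccurs_conseq hqg (heqo x y (Or.inl ⟨rfl, rfl⟩))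
      · refine Str.ext' fun r => ?_
        rw [interp_mapStr, he r, Set.image_empty]
      · intro r t1 ht1
        rw [he r] at ht1
        exact absurd ht1 (Set.notMem_empty t1)
  | ne x y =>
    intro S0 hsat0 _ _ _ hneo
    cases hsat0 with
    | ne he hxy =>
      refine ⟨S0, Sat.ne he ?_, ?_, ?_⟩
      · intro hcc
        obtain ⟨Sg, hsg⟩ := Hglob
        exact hxy ((HCf x y hcc) Sg s_f hsg)
      · refine Str.ext' fun r => ?_
        rw [interp_mapStr, he r, Set.image_empty]
      · intro r t1 ht1
        rw [he r] at ht1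
        exact absurd ht1 (Set.notMem_empty t1)
  | rel r a =>
    intro S0 hsat0 _ hsub _ _
    cases hsat0 with
    | rel h1 h2 =>
      refine ⟨relStr r (fun i => s_c (a i)), ?_, ?_, ?_⟩
      · exact Sat.rel (relStr_interp_self r _) (fun r' hr' => relStr_interp_ne hr' _)
      · refine Str.ext' fun r' => ?_
        rcases Classical.em (r' = r) with rfl | hne
        · rw [interp_mapStr, relStr_interp_self, Set.image_singleton, h1]
          congr 1
          funext i
          exact HH (a i) (hsub ⟨i, rfl⟩)
        · rw [interp_mapStr, relStr_interp_ne hne, Set.image_empty, h2 r' hne]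
      · intro r' t1 ht1 t2 ht2 _
        rcases Classical.em (r' = r) with rfl | hne
        · rw [relStr_interp_self] at ht1 ht2
          rw [Set.mem_singleton_iff] at ht1 ht2
          rw [ht1, ht2]
        · rw [relStr_interp_ne hne] at ht1
          exact absurd ht1 (Set.notMem_empty t1)
  | pred A a =>
    intro S0 hsat0 hq0
    exact absurd hq0 (by simp [SLR.QPF])
  | ex x φ ih =>
    intro S0 hsat0 hq0
    exact absurd hq0 (by simp [SLR.QPF])
  | star ψ1 ψ2 ih1 ih2 =>
    intro S0 hsat0 hq0 hsub heqo hneo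
    cases hsat0 with
    | star hdisj hs1 hs2 =>
      obtain ⟨C1, hsatc1, hmap1, hinj1⟩ :=
        ih1 hs1 hq0.1 (fun z hz => hsub (Or.inl hz))
          (fun x y ho => heqo x y (Or.inl ho)) (fun x y ho => hneo x y (Or.inl ho))
      obtain ⟨C2, hsatc2, hmap2, hinj2⟩ :=
        ih2 hs2 hq0.2 (fun z hz => hsub (Or.inr hz))
          (fun x y ho => heqo x y (Or.inr ho)) (fun x y ho => hneo x y (Or.inr ho))
      have hcross : ∀ r, ∀ t1 ∈ C1.interp r, ∀ t2 ∈ C2.interp r, h ∘ t1 ≠ h ∘ t2 := by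
        intro r t1 ht1 t2 ht2 heq
        have h1 : h ∘ t1 ∈ (mapStr h C1).interp r := ⟨t1, ht1, rfl⟩
        have h2 : h ∘ t2 ∈ (mapStr h C2).interp r := ⟨t2, ht2, rfl⟩
        rw [hmap1] at h1
        rw [hmap2] at h2
        rw [heq] at h1
        exact Set.eq_empty_iff_forall_notMem.mp (hdisj r) _ ⟨h1, h2⟩
      refine ⟨C1.comp C2, Sat.star ?_ hsatc1 hsatc2, ?_, ?_⟩
      · intro r
        apply Set.eq_empty_iff_forall_notMem.mpr
        rintro t ⟨ht1, ht2⟩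
        exact hcross r t ht1 t ht2 rfl
      · rw [mapStr_comp, hmap1, hmap2]
      · intro r t1 ht1 t2 ht2 heq
        rcases ht1 with ht1 | ht1 <;> rcases ht2 with ht2 | ht2
        · exact hinj1 r t1 ht1 t2 ht2 heq
        · exact absurd heq (hcross r t1 ht1 t2 ht2)
        · exact absurd heq.symm (hcross r t2 ht2 t1 ht1)
        · exact hinj2 r t1 ht1 t2 ht2 heq

end Aux5

end SLRTW

namespace SLRTW

section Aux6

variable {Rel : Type} {ar : Rel → ℕ} {V : Type} {Pr : Type} {pa : Pr → ℕ}
variable {Δ : SID Rel ar Pr pa}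

/-- Every model of a nullary predicate atom is an internal fusion of a canonical
model. -/
theorem smod_subset_ief [Infinite V] {A : Pr} (hA : pa A = 0) :
    SMod (V := V) Δ (natom A) ⊆ iefStarSet (Canonical (V := V) Δ (natom A)) := by
  rintro S ⟨s0, hsat⟩
  have hFin0 : IsEmpty (Fin (pa A)) := by rw [hA]; infer_instance
  have hfv : (natom A : SLR Rel ar Pr pa).fv = ∅ := by
    have : (natom A : SLR Rel ar Pr pa).fv = Set.range (fun _ : Fin (pa A) => (0 : ℕ)) := rfl
    rw [this, Set.range_eq_empty]
  obtain ⟨φf, χ, s_f, hsub, hunf, hpf, hnd, hav, hfvχ, hst, hsatm⟩ :=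
    sat_unfold hsat id s0 ∅ Set.finite_empty
      (by rw [hfv]; simp) (by rw [hfv]; simp)
  have hfv2 : χ.fv = ∅ := by
    apply Set.subset_empty_iff.mp
    intro z hz
    have := hfvχ hz
    rw [hfv] at this
    simpa using this
  have hunf' : Unfolds Δ (natom A) χ := by
    cases hsub with
    | pred => exact hunf
  have hq : χ.matrix.QPF := matrix_qpf hpf
  obtain ⟨s_c, h, HCf, HCb, HH⟩ := exists_canonical_store hsatm
  obtain ⟨Sc, hsatc, hmap, hinj⟩ :=
    sat_canonize hq HCf HCb HH ⟨S, hsatm⟩ hsatm hq subset_rfl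
      (fun _ _ o => o) (fun _ _ o => o)
  have hScC : Sc ∈ Canonical (V := V) Δ (natom A) := by
    refine ⟨fun u v => ∃ x y, s_c x = u ∧ s_c y = v ∧ χ.matrix.neOccurs x y,
      χ, hunf', hpf, ⟨hnd, ?_⟩, s_c, ?_, hsatc, fun u v => Iff.rfl⟩
    · intro b _ hb
      rw [hfv2] at hb
      exact Set.notMem_empty b hb
    · intro x _ y _ hxy
      exact HCf x y hxy
  have hfus : S ∈ IntFusion Sc := by
    refine ⟨fun u v => u = v ∨ (u ∈ Sc.supp ∧ v ∈ Sc.supp ∧ h u = h v), ?_, ?_, ?_⟩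
    · constructor
      · exact fun u => Or.inl rfl
      · rintro u v (rfl | ⟨hu, hv, huv⟩)
        · exact Or.inl rfl
        · exact Or.inr ⟨hv, hu, huv.symm⟩
      · rintro u v w (rfl | ⟨hu, hv, huv⟩) h2
        · exact h2
        · rcases h2 with rfl | ⟨hv', hw, hvw⟩
          · exact Or.inr ⟨hu, hv, huv⟩
          · exact Or.inr ⟨hu, hw, huv.trans hvw⟩
    · intro r t1 ht1 t2 ht2 hne
      by_contra hno
      push_neg at hno
      apply hne
      apply hinj r t1 ht1 t2 ht2
      funext i
      rcases hno i with hi | ⟨_, _, hi⟩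
      · exact congrArg h hi
      · exact hi
    · refine ⟨h, ?_, hmap.symm⟩
      intro u hu v hv
      constructor
      · rintro (rfl | ⟨_, _, huv⟩)
        · rfl
        · exact huv
      · exact fun hh => Or.inr ⟨hu, hv, hh⟩
  exact iefStar.intf (iefStar.base hScC) hfus

end Aux6

end SLRTW

namespace SLRTW

section Aux7

variable {Rel : Type} {ar : Rel → ℕ} {V : Type} {Pr : Type} {pa : Pr → ℕ}
variable {Δ : SID Rel ar Pr pa}

theorem substr_interp_subset {S1 S2 : Str Rel ar V} (h : Substr S1 S2) (r : Rel) :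
    S1.interp r ⊆ S2.interp r := by
  intro t ht
  rw [h r] at ht
  exact ht.1

theorem substr_supp_subset {S1 S2 : Str Rel ar V} (h : Substr S1 S2) :
    S1.supp ⊆ S2.supp := by
  rintro u ⟨r, t, ht, i, rfl⟩
  exact ⟨r, t, substr_interp_subset h r ht, i, rfl⟩

theorem connected_of_subsingleton {W : Type*} (G : SimpleGraph W) [Subsingleton W]
    [Nonempty W] : G.Connected := by
  constructor
  intro u v
  rw [Subsingleton.elim u v]

noncomputable def unitDecomp (S : Str Rel ar V) : TreeDecomp S where
  ι := PUnit
  instFin := inferInstance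
  G := ⊥
  isTree := by
    constructor
    · exact connected_of_subsingleton ⊥
    · intro v c hc
      cases c with
      | nil => simp at hc
      | cons h p => exact h
  bag _ := S.supp_finite.toFinset
  bag_cover r t ht :=
    ⟨PUnit.unit, fun i => S.supp_finite.mem_toFinset.mpr (Str.mem_supp ht i)⟩
  bag_conn u hu := by
    have : ({n : PUnit | u ∈ S.supp_finite.toFinset} : Set PUnit).Nonempty :=
      ⟨PUnit.unit, S.supp_finite.mem_toFinset.mpr hu⟩
    have : Nonempty ({n : PUnit | u ∈ S.supp_finite.toFinset} : Set PUnit) := this.to_subtype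
    exact connected_of_subsingleton _

theorem tw_set_nonempty (S : Str Rel ar V) :
    {w | ∃ T : TreeDecomp S, T.width = w}.Nonempty :=
  ⟨(unitDecomp S).width, unitDecomp S, rfl⟩

theorem tw_le_of_substr {S1 S2 : Str Rel ar V} (h : Substr S1 S2) : tw S1 ≤ tw S2 := by
  classical
  obtain ⟨T, hT⟩ := Nat.sInf_mem (tw_set_nonempty S2)
  have hconn : ∀ u ∈ S1.supp,
      (SimpleGraph.induce {n : T.ι | u ∈ (T.bag n).filter (· ∈ S1.supp)} T.G).Connected := by
    intro u hu
    have hset : {n : T.ι | u ∈ (T.bag n).filter (· ∈ S1.supp)} = {n : T.ι | u ∈ T.bag n} := by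
      ext n
      simp only [Set.mem_setOf_eq, Finset.mem_filter, decide_eq_true_eq]
      exact ⟨fun h' => h'.1, fun h' => ⟨h', hu⟩⟩
    rw [hset]
    exact T.bag_conn u (substr_supp_subset h hu)
  let T1 : TreeDecomp S1 :=
    { ι := T.ι, instFin := T.instFin, G := T.G, isTree := T.isTree,
      bag := fun n => (T.bag n).filter (· ∈ S1.supp),
      bag_cover := by
        intro r t ht
        obtain ⟨n, hn⟩ := T.bag_cover r t (substr_interp_subset h r ht)
        exact ⟨n, fun i => Finset.mem_filter.mpr ⟨hn i, Str.mem_supp ht i⟩⟩,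
      bag_conn := hconn }
  have hw : T1.width ≤ T.width := by
    apply Nat.sub_le_sub_right
    apply Finset.sup_mono_fun
    intro n _
    exact Finset.card_filter_le _ _
  calc tw S1 ≤ T1.width := Nat.sInf_le ⟨T1, rfl⟩
    _ ≤ T.width := hw
    _ = tw S2 := hT

theorem tw_mapStr_le {g : V → V} {S : Str Rel ar V} (hg : Set.InjOn g S.supp) :
    tw (mapStr g S) ≤ tw S := by
  classical
  obtain ⟨T, hT⟩ := Nat.sInf_mem (tw_set_nonempty S)
  have hconn : ∀ u' ∈ (mapStr g S).supp,
      (SimpleGraph.induce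
        {n : T.ι | u' ∈ ((T.bag n).filter (· ∈ S.supp)).image g} T.G).Connected := by
    intro u' hu'
    rw [supp_mapStr] at hu'
    obtain ⟨u, hu, rfl⟩ := hu'
    have hset : {n : T.ι | g u ∈ ((T.bag n).filter (· ∈ S.supp)).image g} =
        {n : T.ι | u ∈ T.bag n} := by
      ext n
      simp only [Set.mem_setOf_eq, Finset.mem_image, Finset.mem_filter, decide_eq_true_eq]
      constructor
      · rintro ⟨w, ⟨hwb, hws⟩, hwu⟩
        rwa [hg hws hu hwu] at hwb
      · intro hb
        exact ⟨u, ⟨hb, hu⟩, rfl⟩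
    rw [hset]
    exact T.bag_conn u hu
  let T1 : TreeDecomp (mapStr g S) :=
    { ι := T.ι, instFin := T.instFin, G := T.G, isTree := T.isTree,
      bag := fun n => ((T.bag n).filter (· ∈ S.supp)).image g,
      bag_cover := by
        rintro r t ⟨t0, ht0, rfl⟩
        obtain ⟨n, hn⟩ := T.bag_cover r t0 ht0
        refine ⟨n, fun i => ?_⟩
        exact Finset.mem_image.mpr ⟨t0 i,
          Finset.mem_filter.mpr ⟨hn i, Str.mem_supp ht0 i⟩, rfl⟩,
      bag_conn := hconn }
  have hw : T1.width ≤ T.width := by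
    apply Nat.sub_le_sub_right
    apply Finset.sup_mono_fun
    intro n _
    exact le_trans (Finset.card_image_le) (Finset.card_filter_le _ _)
  calc tw (mapStr g S) ≤ T1.width := Nat.sInf_le ⟨T1, rfl⟩
    _ ≤ T.width := hw
    _ = tw S := hT

/-- Fresh isomorphic copies of canonical models are canonical. -/
theorem canonical_copy [Infinite V] {A : Pr} {S : Str Rel ar V}
    (hS : S ∈ Canonical (V := V) Δ (natom A)) {F : Set V} (hF : F.Finite) :
    ∃ (S' : Str Rel ar V) (g : V → V), S' ∈ Canonical (V := V) Δ (natom A) ∧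
      Set.InjOn g S.supp ∧ S' = mapStr g S ∧ S'.supp ∩ F = ∅ := by
  obtain ⟨d, χ, hunf, hpf, hwn, s, hcs, hsat, hd⟩ := hS
  obtain ⟨g, hginj, hgav⟩ := exists_injOn_avoid
    (((SLR.fv_finite χ.matrix).image s).union S.supp_finite) hF
  have hq := matrix_qpf hpf
  have hsat' : Sat Δ (mapStr g S) (g ∘ s) χ.matrix :=
    sat_map_gen hsat hq
      (fun x y hocc => by
        have hfv := neOccurs_mem_fv hq hocc
        have hne := sat_ne_distinct hsat hq hocc
        intro heq
        exact hne (hginj (Or.inl ⟨x, hfv.1, rfl⟩) (Or.inl ⟨y, hfv.2, rfl⟩) heq))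
      (fun r t1 ht1 t2 ht2 heq => by
        funext i
        exact hginj (Or.inr (Str.mem_supp ht1 i)) (Or.inr (Str.mem_supp ht2 i))
          (congrFun heq i))
  refine ⟨mapStr g S, g, ?_, fun a ha b hb hab => hginj (Or.inr ha) (Or.inr hb) hab,
    rfl, ?_⟩
  · refine ⟨fun u v => ∃ x y, (g ∘ s) x = u ∧ (g ∘ s) y = v ∧ χ.matrix.neOccurs x y,
      χ, hunf, hpf, hwn, g ∘ s, ?_, hsat', fun u v => Iff.rfl⟩
    intro x hx y hy hxy
    exact hcs x hx y hy (hginj (Or.inl ⟨x, hx, rfl⟩) (Or.inl ⟨y, hy, rfl⟩) hxy)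
  · rw [supp_mapStr]
    apply Set.eq_empty_iff_forall_notMem.mpr
    rintro v ⟨⟨u, hu, rfl⟩, hvF⟩
    exact Set.eq_empty_iff_forall_notMem.mp hgav (g u) ⟨⟨u, Or.inr hu, rfl⟩, hvF⟩

/-- Characterization of the equivalence generated by a matching. -/
theorem eqvOf_cases {M : Set (V × V)} (hM : IsMatching M) {x y : V}
    (h : EqvOf (fun a b => (a, b) ∈ M) x y) : x = y ∨ (x, y) ∈ M ∨ (y, x) ∈ M := by
  have hshare : ∀ {a b c d : V}, (a, b) ∈ M → (c, d) ∈ M →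
      (a = c ∨ a = d ∨ b = c ∨ b = d) → a = c ∧ b = d := by
    intro a b c d h1 h2 hsh
    by_cases heq : ((a, b) : V × V) = (c, d)
    · exact ⟨congrArg Prod.fst heq, congrArg Prod.snd heq⟩
    · exfalso
      have hint := hM _ h1 _ h2 heq
      have hmp := Set.eq_empty_iff_forall_notMem.mp hint
      rcases hsh with rfl | rfl | rfl | rfl
      · exact hmp a ⟨Or.inl rfl, Or.inl rfl⟩
      · exact hmp a ⟨Or.inl rfl, Or.inr rfl⟩
      · exact hmp b ⟨Or.inr rfl, Or.inl rfl⟩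
      · exact hmp b ⟨Or.inr rfl, Or.inr rfl⟩
  have hE : Equivalence (fun a b : V => a = b ∨ (a, b) ∈ M ∨ (b, a) ∈ M) := by
    constructor
    · exact fun a => Or.inl rfl
    · rintro a b (rfl | hab | hba)
      · exact Or.inl rfl
      · exact Or.inr (Or.inr hab)
      · exact Or.inr (Or.inl hba)
    · rintro a b c (rfl | hab | hba) h2
      · exact h2
      · rcases h2 with rfl | hbc | hcb
        · exact Or.inr (Or.inl hab)
        · obtain ⟨h1, h2⟩ := hshare hab hbc (Or.inr (Or.inr (Or.inl rfl)))
          exact Or.inl (h1.trans h2)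
        · obtain ⟨h1, h2⟩ := hshare hab hcb (Or.inr (Or.inr (Or.inr rfl)))
          exact Or.inl h1
      · rcases h2 with rfl | hbc | hcb
        · exact Or.inr (Or.inr hba)
        · obtain ⟨h1, h2⟩ := hshare hba hbc (Or.inl rfl)
          exact Or.inl h2
        · obtain ⟨h1, h2⟩ := hshare hba hcb (Or.inr (Or.inl rfl))
          exact Or.inl (h2.trans h1)
  exact h _ hE (fun a b hab => Or.inr (Or.inl hab))

end Aux7

end SLRTW

namespace SLRTW

section Aux8

variable {Rel : Type} {ar : Rel → ℕ} {V : Type} {Pr : Type} {pa : Pr → ℕ}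
variable {Δ : SID Rel ar Pr pa}

/-- Flattening invariant: `S` is a quotient of a disjoint composition of canonical
models, by a map whose fibers are "partial transversals" of the components. -/
def Flat (Δ : SID Rel ar Pr pa) (A : Pr) (S : Str Rel ar V) : Prop :=
  ∀ F : Set V, F.Finite → ∃ (n : ℕ) (Ss : Fin n → Str Rel ar V) (h : V → V),
    (∀ i, Ss i ∈ Canonical (V := V) Δ (natom A)) ∧
    (∀ i j, i ≠ j → (Ss i).supp ∩ (Ss j).supp = ∅) ∧
    (∀ i, (Ss i).supp ∩ F = ∅) ∧
    S = mapStr h (bigComp Ss) ∧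
    (∀ r, ∀ t1 ∈ (bigComp Ss).interp r, ∀ t2 ∈ (bigComp Ss).interp r,
      h ∘ t1 = h ∘ t2 → t1 = t2) ∧
    (∀ u ∈ (bigComp Ss).supp, ∀ v ∈ (bigComp Ss).supp, h u = h v → u ≠ v →
      ∃ a b : Fin n, a ≠ b ∧ u ∈ (Ss a).supp ∧ v ∈ (Ss b).supp)

theorem flat_base [Infinite V] {A : Pr} {S : Str Rel ar V}
    (hS : S ∈ Canonical (V := V) Δ (natom A)) : Flat Δ A S := by
  intro F hF
  obtain ⟨S', g, hC', hginj, hS'eq, havoid⟩ := canonical_copy hS hF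
  classical
  have hinv : ∀ u ∈ S.supp, ∀ w ∈ S.supp, g u = g w → u = w := hginj
  refine ⟨1, fun _ => S',
    fun v => if hv : ∃ u, u ∈ S.supp ∧ g u = v then hv.choose else v,
    fun _ => hC', fun i j hij => absurd (Subsingleton.elim i j) hij,
    fun _ => havoid, ?_, ?_, ?_⟩
  · rw [bigComp_one, hS'eq, mapStr_mapStr]
    refine (mapStr_id_on ?_).symm
    intro v hv
    simp only [Function.comp_apply]
    have hex : ∃ u, u ∈ S.supp ∧ g u = g v := ⟨v, hv, rfl⟩
    rw [dif_pos hex]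
    exact hginj hex.choose_spec.1 hv hex.choose_spec.2
  · intro r t1 ht1 t2 ht2 heq
    rw [bigComp_one, hS'eq] at ht1 ht2
    obtain ⟨w1, hw1, rfl⟩ := ht1
    obtain ⟨w2, hw2, rfl⟩ := ht2
    have hback : ∀ (w : Fin (ar r) → V), w ∈ S.interp r →
        (fun v => if hv : ∃ u, u ∈ S.supp ∧ g u = v then hv.choose else v) ∘ (g ∘ w) = w := by
      intro w hw
      funext i
      simp only [Function.comp_apply]
      have hex : ∃ u, u ∈ S.supp ∧ g u = g (w i) := ⟨w i, Str.mem_supp hw i, rfl⟩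
      rw [dif_pos hex]
      exact hginj hex.choose_spec.1 (Str.mem_supp hw i) hex.choose_spec.2
    have hww : w1 = w2 := by
      funext i
      have hi := congrFun heq i
      have e1 := congrFun (hback w1 hw1) i
      have e2 := congrFun (hback w2 hw2) i
      exact e1.symm.trans (hi.trans e2)
    rw [hww]
  · intro u hu v hv huv hne
    exfalso
    rw [bigComp_one, hS'eq, supp_mapStr] at hu hv
    obtain ⟨u0, hu0, rfl⟩ := hu
    obtain ⟨v0, hv0, rfl⟩ := hv
    have hexu : ∃ w, w ∈ S.supp ∧ g w = g u0 := ⟨u0, hu0, rfl⟩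
    have hexv : ∃ w, w ∈ S.supp ∧ g w = g v0 := ⟨v0, hv0, rfl⟩
    simp only [dif_pos hexu, dif_pos hexv] at huv
    have h1 := hginj hexu.choose_spec.1 hu0 hexu.choose_spec.2
    have h2 := hginj hexv.choose_spec.1 hv0 hexv.choose_spec.2
    rw [h1, h2] at huv
    exact hne (congrArg g huv)

theorem flat_iso {A : Pr} {S S' : Str Rel ar V} (hflat : Flat Δ A S)
    (hiso : IsoCopy S S') : Flat Δ A S' := by
  obtain ⟨g, hg, rfl⟩ := hiso
  intro F hF
  obtain ⟨n, Ss, h, hC, hdj, hav, hSeq, hcp, hstar⟩ := hflat F hF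
  have hsuppS : S.supp = h '' (bigComp Ss).supp := by rw [hSeq, supp_mapStr]
  refine ⟨n, Ss, g ∘ h, hC, hdj, hav, ?_, ?_, ?_⟩
  · rw [hSeq, mapStr_mapStr]
  · intro r t1 ht1 t2 ht2 heq
    refine hcp r t1 ht1 t2 ht2 ?_
    funext i
    refine hg ?_ ?_ (congrFun heq i)
    · rw [hsuppS]; exact ⟨t1 i, Str.mem_supp ht1 i, rfl⟩
    · rw [hsuppS]; exact ⟨t2 i, Str.mem_supp ht2 i, rfl⟩
  · intro u hu v hv huv hne
    refine hstar u hu v hv ?_ hne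
    refine hg ?_ ?_ huv
    · rw [hsuppS]; exact ⟨u, hu, rfl⟩
    · rw [hsuppS]; exact ⟨v, hv, rfl⟩

end Aux8

end SLRTW

namespace SLRTW

section Aux9

variable {Rel : Type} {ar : Rel → ℕ} {V : Type} {Pr : Type} {pa : Pr → ℕ}
variable {Δ : SID Rel ar Pr pa}

theorem flat_fuse [Infinite V] (har : ∀ r, 1 ≤ ar r) {A : Pr} {S1 S2 S : Str Rel ar V}
    (hflat1 : Flat Δ A S1) (hflat2 : Flat Δ A S2) (hfus : S ∈ ExtFusion S1 S2) :
    Flat Δ A S := by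
  obtain ⟨S1', S2', M, hiso1, hiso2, hdisj12, hMne, hMmatch, hMsupp, hMcompat, hquot⟩ := hfus
  obtain ⟨hM, hMiff, hSeq⟩ := hquot
  have hflat1' := flat_iso hflat1 hiso1
  have hflat2' := flat_iso hflat2 hiso2
  intro F hF
  obtain ⟨n1, Ss1, h1, hC1, hdj1, hav1, hEq1, hcp1, hstar1⟩ := hflat1' F hF
  obtain ⟨n2, Ss2, h2, hC2, hdj2, hav2, hEq2, hcp2, hstar2⟩ := hflat2'
    (F ∪ ⋃ i, (Ss1 i).supp) (hF.union (Set.finite_iUnion fun i => (Ss1 i).supp_finite))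
  classical
  have hdisjLR : ∀ (i1 : Fin n1) (j2 : Fin n2), (Ss1 i1).supp ∩ (Ss2 j2).supp = ∅ := by
    intro i1 j2
    apply Set.eq_empty_iff_forall_notMem.mpr
    rintro u ⟨hu1, hu2⟩
    exact Set.eq_empty_iff_forall_notMem.mp (hav2 j2) u
      ⟨hu2, Or.inr (Set.mem_iUnion.mpr ⟨i1, hu1⟩)⟩
  have hdisjC : (bigComp Ss1).supp ∩ (bigComp Ss2).supp = ∅ := by
    apply Set.eq_empty_iff_forall_notMem.mpr
    rintro u ⟨hu1, hu2⟩
    rw [supp_bigComp] at hu1 hu2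
    obtain ⟨i1, hi1⟩ := Set.mem_iUnion.mp hu1
    obtain ⟨j2, hj2⟩ := Set.mem_iUnion.mp hu2
    exact Set.eq_empty_iff_forall_notMem.mp (hdisjLR i1 j2) u ⟨hi1, hj2⟩
  have hfu1 : ∀ v ∈ (bigComp Ss1).supp,
      (if v ∈ (bigComp Ss1).supp then h1 v else h2 v) = h1 v :=
    fun v hv => if_pos hv
  have hfu2 : ∀ v ∈ (bigComp Ss2).supp,
      (if v ∈ (bigComp Ss1).supp then h1 v else h2 v) = h2 v := by
    intro v hv
    refine if_neg ?_
    intro hv1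
    exact Set.eq_empty_iff_forall_notMem.mp hdisjC v ⟨hv1, hv⟩
  have hm1 : mapStr (fun v => if v ∈ (bigComp Ss1).supp then h1 v else h2 v)
      (bigComp Ss1) = S1' := by
    rw [hEq1]; exact mapStr_congr hfu1
  have hm2 : mapStr (fun v => if v ∈ (bigComp Ss1).supp then h1 v else h2 v)
      (bigComp Ss2) = S2' := by
    rw [hEq2]; exact mapStr_congr hfu2
  have hbc : bigComp (Fin.addCases Ss1 Ss2 : Fin (n1 + n2) → Str Rel ar V) =
      (bigComp Ss1).comp (bigComp Ss2) := bigComp_addCases _ _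
  have hcompeq : mapStr (fun v => if v ∈ (bigComp Ss1).supp then h1 v else h2 v)
      (bigComp (Fin.addCases Ss1 Ss2 : Fin (n1 + n2) → Str Rel ar V)) =
      S1'.comp S2' := by
    rw [hbc, mapStr_comp, hm1, hm2]
  have hsupp1' : S1'.supp = h1 '' (bigComp Ss1).supp := by rw [hEq1, supp_mapStr]
  have hsupp2' : S2'.supp = h2 '' (bigComp Ss2).supp := by rw [hEq2, supp_mapStr]
  have hfS1 : ∀ w ∈ (bigComp Ss1).supp,
      (fun v => if v ∈ (bigComp Ss1).supp then h1 v else h2 v) w ∈ S1'.supp := by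
    intro w hw
    rw [hsupp1']
    exact ⟨w, hw, (hfu1 w hw).symm⟩
  have hfS2 : ∀ w ∈ (bigComp Ss2).supp,
      (fun v => if v ∈ (bigComp Ss1).supp then h1 v else h2 v) w ∈ S2'.supp := by
    intro w hw
    rw [hsupp2']
    exact ⟨w, hw, (hfu2 w hw).symm⟩
  have hcases : ∀ i : Fin (n1 + n2),
      (∃ i1, i = Fin.castAdd n2 i1) ∨ (∃ i2, i = Fin.natAdd n1 i2) :=
    fun i => Fin.addCases (fun i1 => Or.inl ⟨i1, rfl⟩) (fun i2 => Or.inr ⟨i2, rfl⟩) i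
  have hL : ∀ i1 : Fin n1,
      (Fin.addCases Ss1 Ss2 : Fin (n1 + n2) → Str Rel ar V) (Fin.castAdd n2 i1) = Ss1 i1 :=
    fun i1 => Fin.addCases_left i1
  have hR : ∀ i2 : Fin n2,
      (Fin.addCases Ss1 Ss2 : Fin (n1 + n2) → Str Rel ar V) (Fin.natAdd n1 i2) = Ss2 i2 :=
    fun i2 => Fin.addCases_right i2
  have hcastne : ∀ (a : Fin n1) (b : Fin n2),
      Fin.castAdd n2 a ≠ Fin.natAdd n1 b := by
    intro a b e
    have := congrArg Fin.val e
    simp only [Fin.coe_castAdd, Fin.coe_natAdd] at this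
    omega
  -- membership of images of component tuples
  have himg1 : ∀ r, ∀ t ∈ (bigComp Ss1).interp r,
      ((fun v => if v ∈ (bigComp Ss1).supp then h1 v else h2 v) ∘ t) ∈ S1'.interp r := by
    intro r t ht
    rw [← hm1]
    exact ⟨t, ht, rfl⟩
  have himg2 : ∀ r, ∀ t ∈ (bigComp Ss2).interp r,
      ((fun v => if v ∈ (bigComp Ss1).supp then h1 v else h2 v) ∘ t) ∈ S2'.interp r := by
    intro r t ht
    rw [← hm2]
    exact ⟨t, ht, rfl⟩
  have hMeq : ∀ r, ∀ u1 ∈ (S1'.comp S2').interp r, ∀ u2 ∈ (S1'.comp S2').interp r,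
      hM ∘ u1 = hM ∘ u2 → u1 = u2 := by
    intro r u1 hu1 u2 hu2 he
    by_contra hneu
    obtain ⟨i, hni⟩ := hMcompat r u1 hu1 u2 hu2 hneu
    exact hni ((hMiff _ (Str.mem_supp hu1 i) _ (Str.mem_supp hu2 i)).mpr (congrFun he i))
  refine ⟨n1 + n2, Fin.addCases Ss1 Ss2,
    hM ∘ (fun v => if v ∈ (bigComp Ss1).supp then h1 v else h2 v), ?_, ?_, ?_, ?_, ?_, ?_⟩
  · intro i
    rcases hcases i with ⟨i1, rfl⟩ | ⟨i2, rfl⟩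
    · rw [hL]; exact hC1 i1
    · rw [hR]; exact hC2 i2
  · intro i j hne
    rcases hcases i with ⟨i1, rfl⟩ | ⟨i2, rfl⟩ <;> rcases hcases j with ⟨j1, rfl⟩ | ⟨j2, rfl⟩
    · rw [hL, hL]
      exact hdj1 i1 j1 (fun e => hne (by rw [e]))
    · rw [hL, hR]
      exact hdisjLR i1 j2
    · rw [hR, hL]
      rw [Set.inter_comm]
      exact hdisjLR j1 i2
    · rw [hR, hR]
      exact hdj2 i2 j2 (fun e => hne (by rw [e]))
  · intro i
    rcases hcases i with ⟨i1, rfl⟩ | ⟨i2, rfl⟩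
    · rw [hL]; exact hav1 i1
    · rw [hR]
      apply Set.eq_empty_iff_forall_notMem.mpr
      rintro u ⟨hu, huF⟩
      exact Set.eq_empty_iff_forall_notMem.mp (hav2 i2) u ⟨hu, Or.inl huF⟩
  · rw [hSeq, ← hcompeq, mapStr_mapStr]
  · intro r t1 ht1 t2 ht2 heq
    rw [hbc] at ht1 ht2
    have hMft : ∀ (ta tb : Fin (ar r) → V),
        ((hM ∘ fun v => if v ∈ (bigComp Ss1).supp then h1 v else h2 v) ∘ ta =
          (hM ∘ fun v => if v ∈ (bigComp Ss1).supp then h1 v else h2 v) ∘ tb) →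
        hM ∘ ((fun v => if v ∈ (bigComp Ss1).supp then h1 v else h2 v) ∘ ta) =
        hM ∘ ((fun v => if v ∈ (bigComp Ss1).supp then h1 v else h2 v) ∘ tb) := by
      intro ta tb he
      funext i
      exact congrFun he i
    rcases ht1 with ht1 | ht1 <;> rcases ht2 with ht2 | ht2
    · have hu := hMeq r _ (Or.inl (himg1 r t1 ht1)) _ (Or.inl (himg1 r t2 ht2))
        (hMft t1 t2 heq)
      refine hcp1 r t1 ht1 t2 ht2 ?_
      funext i
      have := congrFun hu i
      simp only [Function.comp_apply] at this
      rwa [hfu1 _ (Str.mem_supp ht1 i), hfu1 _ (Str.mem_supp ht2 i)] at this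
    · exfalso
      have hu := hMeq r _ (Or.inl (himg1 r t1 ht1)) _ (Or.inr (himg2 r t2 ht2))
        (hMft t1 t2 heq)
      have h1m := Str.mem_supp (himg1 r t1 ht1) ⟨0, har r⟩
      have h2m := Str.mem_supp (himg2 r t2 ht2) ⟨0, har r⟩
      rw [← hu] at h2m
      exact Set.eq_empty_iff_forall_notMem.mp hdisj12 _ ⟨h1m, h2m⟩
    · exfalso
      have hu := hMeq r _ (Or.inr (himg2 r t1 ht1)) _ (Or.inl (himg1 r t2 ht2))
        (hMft t1 t2 heq)
      have h1m := Str.mem_supp (himg2 r t1 ht1) ⟨0, har r⟩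
      have h2m := Str.mem_supp (himg1 r t2 ht2) ⟨0, har r⟩
      rw [← hu] at h2m
      exact Set.eq_empty_iff_forall_notMem.mp hdisj12 _ ⟨h2m, h1m⟩
    · have hu := hMeq r _ (Or.inr (himg2 r t1 ht1)) _ (Or.inr (himg2 r t2 ht2))
        (hMft t1 t2 heq)
      refine hcp2 r t1 ht1 t2 ht2 ?_
      funext i
      have := congrFun hu i
      simp only [Function.comp_apply] at this
      rwa [hfu2 _ (Str.mem_supp ht1 i), hfu2 _ (Str.mem_supp ht2 i)] at this
  · intro u hu v hv huv hne
    rw [hbc, supp_comp] at hu hv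
    have hcsupp : (S1'.comp S2').supp = S1'.supp ∪ S2'.supp := supp_comp _ _
    rcases hu with hu | hu <;> rcases hv with hv | hv
    · -- both in the first group
      have hEqv := (hMiff _ (by rw [hcsupp]; exact Or.inl (hfS1 u hu))
        _ (by rw [hcsupp]; exact Or.inl (hfS1 v hv))).mpr huv
      rcases eqvOf_cases hMmatch hEqv with hfeq | hmem | hmem
      · have hfeq' : (if u ∈ (bigComp Ss1).supp then h1 u else h2 u) =
            (if v ∈ (bigComp Ss1).supp then h1 v else h2 v) := hfeq
        have hh1 : h1 u = h1 v := by
          rwa [hfu1 u hu, hfu1 v hv] at hfeq'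
        obtain ⟨a, b, hab, ha, hb⟩ := hstar1 u hu v hv hh1 hne
        refine ⟨Fin.castAdd n2 a, Fin.castAdd n2 b, ?_, ?_, ?_⟩
        · intro e
          apply hab
          apply Fin.ext
          have := congrArg Fin.val e
          simp only [Fin.coe_castAdd] at this
          exact this
        · rw [hL]; exact ha
        · rw [hL]; exact hb
      · exfalso
        have := (hMsupp _ hmem).2
        exact Set.eq_empty_iff_forall_notMem.mp hdisj12 _ ⟨hfS1 v hv, this⟩
      · exfalso
        have := (hMsupp _ hmem).2
        exact Set.eq_empty_iff_forall_notMem.mp hdisj12 _ ⟨hfS1 u hu, this⟩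
    · rw [supp_bigComp] at hu hv
      obtain ⟨a, ha⟩ := Set.mem_iUnion.mp hu
      obtain ⟨b, hb⟩ := Set.mem_iUnion.mp hv
      refine ⟨Fin.castAdd n2 a, Fin.natAdd n1 b, hcastne a b, ?_, ?_⟩
      · rw [hL]; exact ha
      · rw [hR]; exact hb
    · rw [supp_bigComp] at hu hv
      obtain ⟨a, ha⟩ := Set.mem_iUnion.mp hu
      obtain ⟨b, hb⟩ := Set.mem_iUnion.mp hv
      refine ⟨Fin.natAdd n1 a, Fin.castAdd n2 b, fun e => hcastne b a e.symm, ?_, ?_⟩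
      · rw [hR]; exact ha
      · rw [hL]; exact hb
    · -- both in the second group
      have hEqv := (hMiff _ (by rw [hcsupp]; exact Or.inr (hfS2 u hu))
        _ (by rw [hcsupp]; exact Or.inr (hfS2 v hv))).mpr huv
      rcases eqvOf_cases hMmatch hEqv with hfeq | hmem | hmem
      · have hfeq' : (if u ∈ (bigComp Ss1).supp then h1 u else h2 u) =
            (if v ∈ (bigComp Ss1).supp then h1 v else h2 v) := hfeq
        have hh2 : h2 u = h2 v := by
          rwa [hfu2 u hu, hfu2 v hv] at hfeq'
        obtain ⟨a, b, hab, ha, hb⟩ := hstar2 u hu v hv hh2 hne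
        refine ⟨Fin.natAdd n1 a, Fin.natAdd n1 b, ?_, ?_, ?_⟩
        · intro e
          apply hab
          apply Fin.ext
          have := congrArg Fin.val e
          simp only [Fin.coe_natAdd] at this
          omega
        · rw [hR]; exact ha
        · rw [hR]; exact hb
      · exfalso
        have := (hMsupp _ hmem).1
        exact Set.eq_empty_iff_forall_notMem.mp hdisj12 _ ⟨this, hfS2 u hu⟩
      · exfalso
        have := (hMsupp _ hmem).1
        exact Set.eq_empty_iff_forall_notMem.mp hdisj12 _ ⟨this, hfS2 v hv⟩

theorem efStar_flat [Infinite V] (har : ∀ r, 1 ≤ ar r) {A : Pr} {S : Str Rel ar V}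
    (h : efStar (Canonical (V := V) Δ (natom A)) S) : Flat Δ A S := by
  induction h with
  | base hS => exact flat_base hS
  | iso _ hiso ih => exact flat_iso ih hiso
  | fuse _ _ hf ih1 ih2 => exact flat_fuse har ih1 ih2 hf

end Aux9

end SLRTW

namespace SLRTW

section Aux10

variable {Rel : Type} {ar : Rel → ℕ} {V : Type} {Pr : Type} {pa : Pr → ℕ}
variable {Δ : SID Rel ar Pr pa}

theorem neOccurs_symm {φ : SLR Rel ar Pr pa} {x y : ℕ} (h : φ.neOccurs x y) :
    φ.neOccurs y x := by
  induction φ with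
  | emp => exact absurd h (by simp [SLR.neOccurs])
  | eq a b => exact absurd h (by simp [SLR.neOccurs])
  | ne a b =>
    rcases h with ⟨rfl, rfl⟩ | ⟨rfl, rfl⟩
    · exact Or.inr ⟨rfl, rfl⟩
    · exact Or.inl ⟨rfl, rfl⟩
  | rel r a => exact absurd h (by simp [SLR.neOccurs])
  | pred A a => exact absurd h (by simp [SLR.neOccurs])
  | star φ ψ ih1 ih2 =>
    rcases h with h | h
    · exact Or.inl (ih1 h)
    · exact Or.inr (ih2 h)
  | ex z φ ih => exact ih h

theorem ef_tw_bound [Infinite V] (har : ∀ r, 1 ≤ ar r) {A : Pr}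
    (hexp : Expandable (V := V) Δ A) {k : ℕ}
    (hk : ∀ T ∈ SMod (V := V) Δ (natom A), tw T ≤ k) :
    ∀ S ∈ efStarSet (Canonical (V := V) Δ (natom A)), tw S ≤ k := by
  intro S hS
  obtain ⟨n, Ss, h, hC, hdj, -, hSeq, hcp, hstar⟩ := efStar_flat har hS ∅ Set.finite_empty
  obtain ⟨Sh, d, hrc, hsubstr, hd2, hd3⟩ := hexp n Ss hC hdj
  obtain ⟨χ, hunf, hpf, hwn, sh, hcs, hsat, hdiff⟩ := hrc
  classical
  have hq := matrix_qpf hpf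
  have hcompsub : ∀ r, (bigComp Ss).interp r ⊆ Sh.interp r := substr_interp_subset hsubstr
  have hsupp_sub : (bigComp Ss).supp ⊆ Sh.supp := substr_supp_subset hsubstr
  have hdsym : ∀ u v, d u v → d v u := by
    intro u v hd
    rw [hdiff] at hd ⊢
    obtain ⟨x, y, hx, hy, ho⟩ := hd
    exact ⟨y, x, hy, hx, neOccurs_symm ho⟩
  have hcross : ∀ u v, d u v →
      ¬ ∃ a b, a ≠ b ∧ u ∈ (Ss a).supp ∧ v ∈ (Ss b).supp := by
    rintro u v hd ⟨a, b, hab, ha, hb⟩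
    rcases lt_or_gt_of_ne hab with hlt | hlt
    · exact hd2 a b hlt u ha v hb hd
    · exact hd2 b a hlt v hb u ha (hdsym u v hd)
  obtain ⟨j, hjinj, hjav⟩ := exists_injOn_avoid
    (P := (sh '' χ.matrix.fv ∪ Sh.supp) \ (bigComp Ss).supp)
    (F := h '' (bigComp Ss).supp)
    ((((SLR.fv_finite χ.matrix).image sh).union Sh.supp_finite).diff)
    ((bigComp Ss).supp_finite.image h)
  have hjdisj : ∀ w ∈ (sh '' χ.matrix.fv ∪ Sh.supp) \ (bigComp Ss).supp,
      ∀ u ∈ (bigComp Ss).supp, j w ≠ h u := by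
    intro w hw u hu he
    exact Set.eq_empty_iff_forall_notMem.mp hjav (j w) ⟨⟨w, hw, rfl⟩, ⟨u, hu, he.symm⟩⟩
  have h'eq1 : ∀ v ∈ (bigComp Ss).supp,
      (if v ∈ (bigComp Ss).supp then h v
        else if v ∈ (sh '' χ.matrix.fv ∪ Sh.supp) \ (bigComp Ss).supp then j v else v)
      = h v := fun v hv => if_pos hv
  have h'eq2 : ∀ v ∈ (sh '' χ.matrix.fv ∪ Sh.supp) \ (bigComp Ss).supp,
      (if v ∈ (bigComp Ss).supp then h v
        else if v ∈ (sh '' χ.matrix.fv ∪ Sh.supp) \ (bigComp Ss).supp then j v else v)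
      = j v := fun v hv => (if_neg hv.2).trans (if_pos hv)
  have Hne : ∀ x y, χ.matrix.neOccurs x y →
      (fun v => if v ∈ (bigComp Ss).supp then h v
        else if v ∈ (sh '' χ.matrix.fv ∪ Sh.supp) \ (bigComp Ss).supp then j v else v)
        (sh x) ≠
      (fun v => if v ∈ (bigComp Ss).supp then h v
        else if v ∈ (sh '' χ.matrix.fv ∪ Sh.supp) \ (bigComp Ss).supp then j v else v)
        (sh y) := by
    intro x y hocc heq0
    have heq : (if sh x ∈ (bigComp Ss).supp then h (sh x)
        else if sh x ∈ (sh '' χ.matrix.fv ∪ Sh.supp) \ (bigComp Ss).supp then j (sh x)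
          else sh x)
        = (if sh y ∈ (bigComp Ss).supp then h (sh y)
        else if sh y ∈ (sh '' χ.matrix.fv ∪ Sh.supp) \ (bigComp Ss).supp then j (sh y)
          else sh y) := heq0
    have hxy := neOccurs_mem_fv hq hocc
    have hsne := sat_ne_distinct hsat hq hocc
    by_cases hu : sh x ∈ (bigComp Ss).supp <;> by_cases hv : sh y ∈ (bigComp Ss).supp
    · rw [h'eq1 _ hu, h'eq1 _ hv] at heq
      obtain ⟨a, b, hab, ha, hb⟩ := hstar (sh x) hu (sh y) hv heq hsne
      exact hcross (sh x) (sh y) ((hdiff _ _).mpr ⟨x, y, rfl, rfl, hocc⟩) ⟨a, b, hab, ha, hb⟩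
    · have hyD : sh y ∈ (sh '' χ.matrix.fv ∪ Sh.supp) \ (bigComp Ss).supp :=
        ⟨Or.inl ⟨y, hxy.2, rfl⟩, hv⟩
      rw [h'eq1 _ hu, h'eq2 _ hyD] at heq
      exact hjdisj _ hyD _ hu heq.symm
    · have hxD : sh x ∈ (sh '' χ.matrix.fv ∪ Sh.supp) \ (bigComp Ss).supp :=
        ⟨Or.inl ⟨x, hxy.1, rfl⟩, hu⟩
      rw [h'eq2 _ hxD, h'eq1 _ hv] at heq
      exact hjdisj _ hxD _ hv heq
    · have hxD : sh x ∈ (sh '' χ.matrix.fv ∪ Sh.supp) \ (bigComp Ss).supp :=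
        ⟨Or.inl ⟨x, hxy.1, rfl⟩, hu⟩
      have hyD : sh y ∈ (sh '' χ.matrix.fv ∪ Sh.supp) \ (bigComp Ss).supp :=
        ⟨Or.inl ⟨y, hxy.2, rfl⟩, hv⟩
      rw [h'eq2 _ hxD, h'eq2 _ hyD] at heq
      exact hsne (hjinj hxD hyD heq)
  have Hinj : ∀ r, ∀ t1 ∈ Sh.interp r, ∀ t2 ∈ Sh.interp r,
      ((fun v => if v ∈ (bigComp Ss).supp then h v
        else if v ∈ (sh '' χ.matrix.fv ∪ Sh.supp) \ (bigComp Ss).supp then j v else v) ∘ t1)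
      = ((fun v => if v ∈ (bigComp Ss).supp then h v
        else if v ∈ (sh '' χ.matrix.fv ∪ Sh.supp) \ (bigComp Ss).supp then j v else v) ∘ t2)
      → t1 = t2 := by
    intro r t1 ht1 t2 ht2 heq
    by_contra hne12
    have hzone : ∀ i, t1 i ≠ t2 i →
        t1 i ∈ (bigComp Ss).supp ∧ t2 i ∈ (bigComp Ss).supp ∧ h (t1 i) = h (t2 i) := by
      intro i hnei
      have hu := Str.mem_supp ht1 i
      have hv := Str.mem_supp ht2 i
      have hpi : (if t1 i ∈ (bigComp Ss).supp then h (t1 i)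
          else if t1 i ∈ (sh '' χ.matrix.fv ∪ Sh.supp) \ (bigComp Ss).supp then j (t1 i)
            else t1 i)
          = (if t2 i ∈ (bigComp Ss).supp then h (t2 i)
          else if t2 i ∈ (sh '' χ.matrix.fv ∪ Sh.supp) \ (bigComp Ss).supp then j (t2 i)
            else t2 i) := congrFun heq i
      by_cases h1m : t1 i ∈ (bigComp Ss).supp <;> by_cases h2m : t2 i ∈ (bigComp Ss).supp
      · rw [h'eq1 _ h1m, h'eq1 _ h2m] at hpi
        exact ⟨h1m, h2m, hpi⟩
      · exfalso
        have h2D : t2 i ∈ (sh '' χ.matrix.fv ∪ Sh.supp) \ (bigComp Ss).supp :=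
          ⟨Or.inr hv, h2m⟩
        rw [h'eq1 _ h1m, h'eq2 _ h2D] at hpi
        exact hjdisj _ h2D _ h1m hpi.symm
      · exfalso
        have h1D : t1 i ∈ (sh '' χ.matrix.fv ∪ Sh.supp) \ (bigComp Ss).supp :=
          ⟨Or.inr hu, h1m⟩
        rw [h'eq2 _ h1D, h'eq1 _ h2m] at hpi
        exact hjdisj _ h1D _ h2m hpi
      · exfalso
        have h1D : t1 i ∈ (sh '' χ.matrix.fv ∪ Sh.supp) \ (bigComp Ss).supp :=
          ⟨Or.inr hu, h1m⟩
        have h2D : t2 i ∈ (sh '' χ.matrix.fv ∪ Sh.supp) \ (bigComp Ss).supp :=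
          ⟨Or.inr hv, h2m⟩
        rw [h'eq2 _ h1D, h'eq2 _ h2D] at hpi
        exact hnei (hjinj h1D h2D hpi)
    have hex : ∃ i, t1 i ≠ t2 i := by
      by_contra hno
      push_neg at hno
      exact hne12 (funext hno)
    obtain ⟨i0, hi0⟩ := hex
    obtain ⟨hm1, hm2, hh0⟩ := hzone i0 hi0
    obtain ⟨a, b, hab, ha, hb⟩ := hstar _ hm1 _ hm2 hh0 hi0
    by_cases hshare : ∃ ki li, t1 ki = t2 li
    · obtain ⟨ki, li, hkl⟩ := hshare
      apply hd3
      rcases lt_or_gt_of_ne hab with hlt | hlt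
      · exact ⟨r, t1, t2, a, b, ht1, ht2, hlt, ⟨i0, ha⟩, ⟨i0, hb⟩, ki, li, hkl⟩
      · exact ⟨r, t2, t1, b, a, ht2, ht1, hlt, ⟨i0, hb⟩, ⟨i0, ha⟩, li, ki, hkl.symm⟩
    · push_neg at hshare
      have hall : ∀ i, t1 i ∈ (bigComp Ss).supp ∧ t2 i ∈ (bigComp Ss).supp ∧
          h (t1 i) = h (t2 i) := fun i => hzone i (hshare i i)
      have ht1c : t1 ∈ (bigComp Ss).interp r := by
        rw [hsubstr r]
        exact ⟨ht1, fun i => (hall i).1⟩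
      have ht2c : t2 ∈ (bigComp Ss).interp r := by
        rw [hsubstr r]
        exact ⟨ht2, fun i => (hall i).2.1⟩
      exact hne12 (hcp r t1 ht1c t2 ht2c (funext fun i => (hall i).2.2))
  have hsatT := sat_map_gen hsat hq Hne Hinj
  have hTmod : mapStr (fun v => if v ∈ (bigComp Ss).supp then h v
      else if v ∈ (sh '' χ.matrix.fv ∪ Sh.supp) \ (bigComp Ss).supp then j v else v) Sh
      ∈ SMod (V := V) Δ (natom A) :=
    ⟨_, unfolds_sat hunf (sat_of_matrix hsatT)⟩
  have hSh' : S = mapStr (fun v => if v ∈ (bigComp Ss).supp then h v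
      else if v ∈ (sh '' χ.matrix.fv ∪ Sh.supp) \ (bigComp Ss).supp then j v else v)
      (bigComp Ss) := by
    rw [hSeq]
    exact (mapStr_congr (fun v hv => h'eq1 v hv)).symm
  have hsuppS : S.supp = h '' (bigComp Ss).supp := by rw [hSeq, supp_mapStr]
  have hsub : Substr S (mapStr (fun v => if v ∈ (bigComp Ss).supp then h v
      else if v ∈ (sh '' χ.matrix.fv ∪ Sh.supp) \ (bigComp Ss).supp then j v else v) Sh) := by
    intro r
    ext t
    constructor
    · intro ht
      rw [hSh'] at ht
      obtain ⟨t0, ht0, rfl⟩ := ht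
      refine ⟨⟨t0, hcompsub r ht0, rfl⟩, ?_⟩
      intro i
      rw [hsuppS]
      exact ⟨t0 i, Str.mem_supp ht0 i, (h'eq1 _ (Str.mem_supp ht0 i)).symm⟩
    · rintro ⟨⟨t0, ht0, rfl⟩, hel⟩
      have hall : ∀ i, t0 i ∈ (bigComp Ss).supp := by
        intro i
        by_contra hni
        have hmem := hel i
        rw [hsuppS] at hmem
        obtain ⟨w, hw, hweq⟩ := hmem
        have hDmem : t0 i ∈ (sh '' χ.matrix.fv ∪ Sh.supp) \ (bigComp Ss).supp :=
          ⟨Or.inr (Str.mem_supp ht0 i), hni⟩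
        apply hjdisj _ hDmem w hw
        rw [← h'eq2 _ hDmem]
        exact hweq.symm
      have ht0c : t0 ∈ (bigComp Ss).interp r := by
        rw [hsubstr r]
        exact ⟨ht0, hall⟩
      rw [hSh']
      exact ⟨t0, ht0c, rfl⟩
  calc tw S ≤ tw _ := tw_le_of_substr hsub
    _ ≤ k := hk _ hTmod

end Aux10

end SLRTW

namespace SLRTW

/-- Lemma 3.10: for an expandable SID, treewidth boundedness of the
closure of the canonical models under internal and external fusions implies that of
the set of models, which implies treewidth boundedness of the closure of the canonical
models under external fusions. -/
theorem expandable_fusion_twb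
    (Rel : Type) [Fintype Rel] (ar : Rel → ℕ) (har : ∀ r, 1 ≤ ar r)
    (V : Type) [Infinite V] (Pr : Type) (pa : Pr → ℕ)
    (Δ : SID Rel ar Pr pa) (A : Pr) (hA : pa A = 0) (hexp : Expandable (V := V) Δ A) :
    (TWB (iefStarSet (Canonical (V := V) Δ (natom A))) →
      TWB (SMod (V := V) Δ (natom A))) ∧
    (TWB (SMod (V := V) Δ (natom A)) →
      TWB (efStarSet (Canonical (V := V) Δ (natom A)))) := by
  constructor
  · rintro ⟨k, hk⟩
    exact ⟨k, fun S hS => hk S (smod_subset_ief hA hS)⟩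
  · rintro ⟨k, hk⟩
    exact ⟨k, fun S hS => ef_tw_bound har hexp hk S hS⟩

end SLRTW
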